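/- arXiv:2412.16903 — 9 statements merged into one kernel-verified Lean document; each statement's English description precedes it below -/
import Mathlib

section
/- Let R be a (nonunital) associative commutative ring with free Z-linear basis {x_s : s ≥ 1} (set x_0 = 0), such that each product x_m x_n is a nonnegative integer combination of the x_s for s > 0, and x_1 x_2 = 2 x_1. Suppose the Z-linear functional f : R → Z defined by f(x_s) = s satisfies f(x_s x_t) = 2·min(s,t) for all s,t. Then x_m x_n = 2 x_{min(m,n)} whenever m ≠ n. -/
open Finsupp in
lemma units_lemma {A : Type*} [DecidableEq A] (c : A →₀ ℤ) (hc : ∀ a, 0 ≤ c a) (w : A → ℤ)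
    (hw : ∀ a ∈ c.support, 1 ≤ w a)
    (h : c.sum (fun a v => v * w a) = 2) :
    (∃ a, c = Finsupp.single a 2 ∧ w a = 1) ∨ (∃ a, c = Finsupp.single a 1 ∧ w a = 2) ∨
    (∃ a a', a ≠ a' ∧ c = Finsupp.single a 1 + Finsupp.single a' 1 ∧ w a = 1 ∧ w a' = 1) := by
  have hterm : ∀ a ∈ c.support, 1 ≤ c a * w a := by
    intro a ha
    have h1 : 1 ≤ c a := by
      have := hc a; have := Finsupp.mem_support_iff.mp ha; omega
    have h2 := hw a ha
    nlinarith
  have hcard : (c.support.card : ℤ) ≤ 2 := by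
    calc (c.support.card : ℤ) = ∑ _a ∈ c.support, (1:ℤ) := by simp
    _ ≤ ∑ a ∈ c.support, c a * w a := Finset.sum_le_sum hterm
    _ = 2 := h
  have hcard' : c.support.card ≤ 2 := by exact_mod_cast hcard
  rcases (show c.support.card = 0 ∨ c.support.card = 1 ∨ c.support.card = 2 by omega) with h0 | h1 | h2
  · exfalso
    have : c = 0 := Finsupp.card_support_eq_zero.mp h0
    rw [this] at h
    simp [Finsupp.sum] at h
  · obtain ⟨a, v, hv0, hcv⟩ := Finsupp.card_support_eq_one'.mp h1
    have ha : a ∈ c.support := by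
      rw [hcv]; simp [Finsupp.mem_support_iff, hv0]
    have hwa := hw a ha
    have hva : c a = v := by rw [hcv]; simp
    have hv1 : 1 ≤ v := by have := hc a; rw [hva] at this; omega
    rw [hcv, Finsupp.sum_single_index (by ring)] at h
    have hv2 : v ≤ 2 := by nlinarith
    rcases (show v = 1 ∨ v = 2 by omega) with rfl | rfl
    · right; left; exact ⟨a, hcv, by linarith⟩
    · left; exact ⟨a, hcv, by linarith⟩
  · obtain ⟨a, a', hne, hsupp⟩ := Finset.card_eq_two.mp h2
    have ha : a ∈ c.support := by rw [hsupp]; simp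
    have ha' : a' ∈ c.support := by rw [hsupp]; simp
    have hsum : c a * w a + c a' * w a' = 2 := by
      rw [Finsupp.sum, hsupp, Finset.sum_pair hne] at h
      exact h
    have t1 := hterm a ha
    have t2 := hterm a' ha'
    have e1 : c a * w a = 1 := by omega
    have e2 : c a' * w a' = 1 := by omega
    have hca : 1 ≤ c a := by
      have := hc a; have := Finsupp.mem_support_iff.mp ha; omega
    have hca' : 1 ≤ c a' := by
      have := hc a'; have := Finsupp.mem_support_iff.mp ha'; omega
    have hwa := hw a ha
    have hwa' := hw a' ha'
    have hca1 : c a = 1 := by nlinarith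
    have hca'1 : c a' = 1 := by nlinarith
    have hwa1 : w a = 1 := by nlinarith
    have hwa'1 : w a' = 1 := by nlinarith
    right; right
    refine ⟨a, a', hne, ?_, hwa1, hwa'1⟩
    ext t
    by_cases hta : t = a
    · subst hta; simp [hca1, Finsupp.single_apply, hne.symm, Ne.symm hne]
    · by_cases hta' : t = a'
      · subst hta'; simp [hca'1, Finsupp.single_apply, hne, hta]
      · have : t ∉ c.support := by rw [hsupp]; simp [hta, hta']
        have hct := Finsupp.notMem_support_iff.mp this
        simp [hct, Finsupp.single_apply, Ne.symm hta, Ne.symm hta']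

/-- Bašev's lemma. `R` is a nonunital commutative associative ring with a free
`ℤ`-basis `x 1, x 2, …` (and `x 0 = 0`), products of basis elements are nonnegative integer
combinations of basis elements, `x 1 * x 2 = 2 • x 1`, and the linear functional `f` with
`f (x s) = s` satisfies `f (x s * x t) = 2 * min s t`.  Then `x m * x n = 2 • x (min m n)`
whenever `m ≠ n`. -/
theorem basev_lemma (R : Type*) [NonUnitalCommRing R]
    (x : ℕ → R) (hx0 : x 0 = 0)
    (b : Module.Basis {s : ℕ // 0 < s} ℤ R) (hb : ∀ s : {s : ℕ // 0 < s}, b s = x s.val)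
    (hnonneg : ∀ m n : ℕ, 0 < m → 0 < n → ∀ s : {s : ℕ // 0 < s},
      0 ≤ b.repr (x m * x n) s)
    (hx12 : x 1 * x 2 = (2 : ℤ) • x 1)
    (f : R →ₗ[ℤ] ℤ) (hf : ∀ s : ℕ, 0 < s → f (x s) = s)
    (hfmul : ∀ s t : ℕ, 0 < s → 0 < t → f (x s * x t) = 2 * min s t) :
    ∀ m n : ℕ, 0 < m → 0 < n → m ≠ n → x m * x n = (2 : ℤ) • x (min m n) := by
  classical
  have hfmul' : ∀ s t : ℕ, 0 < s → 0 < t →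
      f (x s * x t) = 2 * min (s:ℤ) (t:ℤ) := by
    intro s t hs ht
    have := hfmul s t hs ht
    exact_mod_cast this
  -- f on a general element, via basis expansion
  have frepr : ∀ y : R, f y = (b.repr y).sum (fun s v => v * (s.1 : ℤ)) := by
    intro y
    conv_lhs => rw [← b.linearCombination_repr y]
    rw [Finsupp.linearCombination_apply, map_finsuppSum]
    refine Finsupp.sum_congr (fun s _ => ?_)
    rw [map_smul, hb, hf s.1 s.2, smul_eq_mul]
  -- f (x k * y) on a general element
  have fmul : ∀ k : ℕ, 0 < k → ∀ y : R,
      f (x k * y) = (b.repr y).sum (fun s v => v * (2 * min (k:ℤ) (s.1:ℤ))) := by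
    intro k hk y
    conv_lhs => rw [← b.linearCombination_repr y]
    rw [Finsupp.linearCombination_apply, Finsupp.sum, Finset.mul_sum, map_sum, Finsupp.sum]
    refine Finset.sum_congr rfl (fun s _ => ?_)
    rw [mul_smul_comm, map_smul, hb, hfmul' k s.1 hk s.2, smul_eq_mul]
  -- recovering elements from their coordinates
  have ysingle : ∀ (y : R) (a : {s : ℕ // 0 < s}) (k : ℤ),
      b.repr y = Finsupp.single a k → y = k • x a.1 := by
    intro y a k hrep
    apply b.repr.injective
    rw [hrep, map_smul, ← hb, b.repr_self, Finsupp.smul_single, smul_eq_mul, mul_one]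
  have ydouble : ∀ (y : R) (a a' : {s : ℕ // 0 < s}),
      b.repr y = Finsupp.single a 1 + Finsupp.single a' 1 → y = x a.1 + x a'.1 := by
    intro y a a' hrep
    apply b.repr.injective
    rw [hrep, map_add, ← hb, ← hb, b.repr_self, b.repr_self]
  -- dichotomy for x 1 * x q
  have dich1 : ∀ q, 0 < q → x 1 * x q = (2:ℤ) • x 1 ∨ x 1 * x q = x 2 := by
    intro q hq
    have hfy : (b.repr (x 1 * x q)).sum (fun s v => v * (s.1 : ℤ)) = 2 := by
      rw [← frepr, hfmul' 1 q one_pos hq, min_eq_left (by exact_mod_cast hq)]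
      norm_num
    rcases units_lemma (b.repr (x 1 * x q)) (hnonneg 1 q one_pos hq) (fun s => (s.1:ℤ))
        (fun s _ => by show (1:ℤ) ≤ (s.1:ℤ); exact_mod_cast s.2) hfy with
      ⟨a, hc, hw⟩ | ⟨a, hc, hw⟩ | ⟨a, a', hne, hc, hw, hw'⟩
    · have ha : a.1 = 1 := by exact_mod_cast hw
      left; rw [ysingle (x 1 * x q) a 2 hc, ha]
    · have ha : a.1 = 2 := by exact_mod_cast hw
      right; rw [ysingle (x 1 * x q) a 1 hc, ha, one_smul]
    · exfalso
      have ha : a.1 = 1 := by exact_mod_cast hw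
      have ha' : a'.1 = 1 := by exact_mod_cast hw'
      exact hne (Subtype.ext (by omega))
  -- x 1 * x q = 2 • x 1 for q ≥ 2
  have h1 : ∀ q, 1 < q → x 1 * x q = (2:ℤ) • x 1 := by
    intro q hq
    rcases dich1 q (by omega) with h | h
    · exact h
    · exfalso
      have hA : (x 1 * x 1) * x q = (2:ℤ) • x 1 := by
        rw [mul_assoc, h, hx12]
      rcases dich1 1 one_pos with h11 | h11
      · rw [h11, smul_mul_assoc, h] at hA
        have := congrArg f hA
        rw [map_smul, map_smul, hf 2 (by norm_num), hf 1 one_pos] at this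
        simp [smul_eq_mul] at this
      · rw [h11] at hA
        have := congrArg f hA
        rw [hfmul' 2 q (by norm_num) (by omega), map_smul, hf 1 one_pos,
          min_eq_left (by exact_mod_cast hq)] at this
        simp [smul_eq_mul] at this
  -- the key statement, by strong induction on the smaller index
  have key : ∀ m, 0 < m → ∀ n, m < n → x m * x n = (2:ℤ) • x m := by
    intro m
    induction m using Nat.strong_induction_on with
    | _ m ih =>
    intro hm n hmn
    rcases eq_or_lt_of_le (Nat.succ_le_of_lt hm) with hm1 | hm2
    · -- m = 1
      have : m = 1 := hm1.symm
      subst this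
      exact h1 n hmn
    · -- 2 ≤ m
      have hm2' : 2 ≤ m := hm2
      have hkm : x (m-1) * x m = (2:ℤ) • x (m-1) :=
        ih (m-1) (by omega) (by omega) m (by omega)
      have h1m : x 1 * x m = (2:ℤ) • x 1 := h1 m (by omega)
      -- dichotomy for x m * x q, q ≥ m
      have dich : ∀ q, m ≤ q → x m * x q = (2:ℤ) • x m ∨
          x m * x q = x (m-1) + x (m+1) := by
        intro q hq
        have hq0 : 0 < q := by omega
        have hkq : x (m-1) * x q = (2:ℤ) • x (m-1) :=
          ih (m-1) (by omega) (by omega) q (by omega)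
        have h1q : x 1 * x q = (2:ℤ) • x 1 := h1 q (by omega)
        set c := b.repr (x m * x q) with hc_def
        -- S3 : sum of v * s = 2m
        have S3 : c.sum (fun s v => v * (s.1 : ℤ)) = 2 * m := by
          rw [hc_def, ← frepr, hfmul' m q hm hq0, min_eq_left (by exact_mod_cast hq)]
        -- S1 : sum of coefficients = 2
        have S1 : c.sum (fun s v => v * (1:ℤ)) = 2 := by
          have e1 : f (x 1 * (x m * x q)) = 4 := by
            rw [← mul_assoc, h1m, smul_mul_assoc, map_smul, h1q, map_smul,
              hf 1 one_pos]
            norm_num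
          rw [fmul 1 one_pos (x m * x q), ← hc_def] at e1
          have e2 : c.sum (fun s v => v * (2 * min ((1:ℕ):ℤ) (s.1:ℤ)))
              = c.sum (fun s v => (v * 1) * 2) := by
            refine Finsupp.sum_congr (fun s _ => ?_)
            rw [min_eq_left (by exact_mod_cast s.2)]
            push_cast
            ring
          rw [e2, ← Finsupp.sum_mul] at e1
          linarith
        -- S2 : sum of v * min(m-1, s) = 2(m-1)
        have S2 : c.sum (fun s v => v * min ((m:ℤ)-1) (s.1:ℤ)) = 2 * ((m:ℤ)-1) := by
          have e1 : f (x (m-1) * (x m * x q)) = 4 * ((m:ℤ)-1) := by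
            rw [← mul_assoc, hkm, smul_mul_assoc, map_smul, hkq, map_smul,
              hf (m-1) (by omega)]
            have : ((m-1 : ℕ) : ℤ) = (m:ℤ) - 1 := by
              push_cast [Nat.cast_sub (by omega : 1 ≤ m)]; ring
            rw [this, smul_eq_mul, smul_eq_mul]
            ring
          rw [fmul (m-1) (by omega) (x m * x q), ← hc_def] at e1
          have hcast : ((m-1 : ℕ) : ℤ) = (m:ℤ) - 1 := by
            push_cast [Nat.cast_sub (by omega : 1 ≤ m)]; ring
          have e2 : c.sum (fun s v => v * (2 * min (((m-1):ℕ):ℤ) (s.1:ℤ)))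
              = c.sum (fun s v => (v * min ((m:ℤ)-1) (s.1:ℤ)) * 2) := by
            refine Finsupp.sum_congr (fun s _ => ?_)
            rw [hcast]; ring
          rw [e2, ← Finsupp.sum_mul] at e1
          linarith
        -- apply the units lemma with constant weight 1
        rcases units_lemma c (fun a => by rw [hc_def]; exact hnonneg m q hm hq0 a)
            (fun _ => (1:ℤ)) (fun s _ => le_refl 1) S1 with
          ⟨a, hc, _⟩ | ⟨a, _, hw⟩ | ⟨a, a', hne, hc, _, _⟩
        · -- c = single a 2
          rw [hc, Finsupp.sum_single_index (by ring)] at S3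
          have ha : a.1 = m := by
            have h2a : 2 * (a.1:ℤ) = 2 * m := S3
            exact_mod_cast (by linarith : (a.1:ℤ) = m)
          left
          rw [ysingle (x m * x q) a 2 (by rw [← hc_def]; exact hc), ha]
        · simp at hw
        · -- c = single a 1 + single a' 1
          have hsum_eval : ∀ (g : {s : ℕ // 0 < s} → ℤ),
              c.sum (fun s v => v * g s) = g a + g a' := by
            intro g
            rw [hc, Finsupp.sum_add_index' (fun s => by ring)
              (fun s v1 v2 => by ring),
              Finsupp.sum_single_index (by ring), Finsupp.sum_single_index (by ring),
              one_mul, one_mul]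
          rw [hsum_eval (fun s => (s.1:ℤ))] at S3
          rw [hsum_eval (fun s => min ((m:ℤ)-1) (s.1:ℤ))] at S2
          have hA1 : (1:ℤ) ≤ (a.1:ℤ) := by exact_mod_cast a.2
          have hA1' : (1:ℤ) ≤ (a'.1:ℤ) := by exact_mod_cast a'.2
          have hMne : (a.1:ℤ) ≠ (a'.1:ℤ) := by
            intro h
            exact hne (Subtype.ext (by exact_mod_cast h))
          have hm2z : (2:ℤ) ≤ (m:ℤ) := by exact_mod_cast hm2'
          have hcases : ((a.1:ℤ) = (m:ℤ)-1 ∧ (a'.1:ℤ) = (m:ℤ)+1) ∨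
              ((a.1:ℤ) = (m:ℤ)+1 ∧ (a'.1:ℤ) = (m:ℤ)-1) := by omega
          right
          rw [ydouble (x m * x q) a a' (by rw [← hc_def]; exact hc)]
          rcases hcases with ⟨e, e'⟩ | ⟨e, e'⟩
          · have ea : a.1 = m - 1 := by omega
            have ea' : a'.1 = m + 1 := by omega
            rw [ea, ea']
          · have ea : a.1 = m + 1 := by omega
            have ea' : a'.1 = m - 1 := by omega
            rw [ea, ea', add_comm]
      -- now the main argument
      rcases dich n hmn.le with h | hy
      · exact h
      · exfalso
        have hcast : ((m-1 : ℕ) : ℤ) = (m:ℤ) - 1 := by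
          push_cast [Nat.cast_sub (by omega : 1 ≤ m)]; ring
        have hz : f (x m * (x m * x n)) = 4 * (m:ℤ) - 2 := by
          rw [hy, mul_add, map_add, hfmul' m (m-1) hm (by omega),
            hfmul' m (m+1) hm (by omega)]
          rw [hcast]
          push_cast
          omega
        rcases dich m le_rfl with hu | hu
        · have hz2 : f ((x m * x m) * x n) = 4 * (m:ℤ) := by
            rw [hu, smul_mul_assoc, map_smul, hfmul' m n hm (by omega),
              min_eq_left (by exact_mod_cast hmn.le), smul_eq_mul]
            ring
          rw [mul_assoc] at hz2
          omega
        · have hz2 : f ((x m * x m) * x n) = 4 * (m:ℤ) := by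
            rw [hu, add_mul, map_add, hfmul' (m-1) n (by omega) (by omega),
              hfmul' (m+1) n (by omega) (by omega), hcast]
            push_cast
            omega
          rw [mul_assoc] at hz2
          omega
  -- wrap up
  intro m n hm hn hmn
  rcases lt_or_gt_of_ne hmn with h | h
  · rw [min_eq_left h.le]
    exact key m hm n h
  · rw [min_eq_right h.le, mul_comm]
    exact key n hn m h
end

section
/- Let S be any set of positive integers containing no two consecutive integers. Define R to be the free abelian group on generators x_1, x_2, ... (with x_0 = 0) and multiplication determined on generators by: x_s x_t = 2 x_{min(s,t)} if s ≠ t; x_s x_s = 2 x_s if s ∉ S; and x_s x_s = x_{s-1} + x_{s+1} if s ∈ S; extended Z-bilinearly. Then R is an associative commutative ring, and the Z-linear functional f with f(x_s) = s satisfies f(x_s x_t) = 2·min(s,t) for all s, t. -/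
open scoped Classical

/-- The generator `x n` of the free abelian group on `ℕ → ℤ`, with `x 0 = 0`. -/
noncomputable def basevX (n : ℕ) : ℕ →₀ ℤ :=
  if n = 0 then 0 else Finsupp.single n 1

/-- The product of two generators, according to the set `S`. -/
noncomputable def basevGen (S : Set ℕ) (s t : ℕ) : ℕ →₀ ℤ :=
  if s = t then
    (if s ∈ S then basevX (s - 1) + basevX (s + 1) else (2 : ℤ) • basevX s)
  else (2 : ℤ) • basevX (min s t)

/-- The bilinear extension of `basevGen` to the free abelian group. -/
noncomputable def basevMul (S : Set ℕ) (a b : ℕ →₀ ℤ) : ℕ →₀ ℤ :=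
  a.sum fun s as => b.sum fun t bt => (as * bt) • basevGen S s t

/-- The `ℤ`-linear functional with `f (x s) = s`. -/
noncomputable def basevF (a : ℕ →₀ ℤ) : ℤ :=
  a.sum fun s as => as * (s : ℤ)


section
variable (S : Set ℕ)

lemma basevGen_symm (s t : ℕ) : basevGen S s t = basevGen S t s := by
  unfold basevGen
  rcases eq_or_ne s t with h | h
  · simp [h]
  · simp [h, h.symm, min_comm]

lemma basevGen_zero_left (h0 : (0:ℕ) ∉ S) (t : ℕ) : basevGen S 0 t = 0 := by
  rcases eq_or_ne 0 t with h | h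
  · simp [basevGen, ← h, h0, basevX]
  · simp [basevGen, h, basevX, Nat.zero_min]

lemma basevGen_zero_right (h0 : (0:ℕ) ∉ S) (s : ℕ) : basevGen S s 0 = 0 := by
  rw [basevGen_symm, basevGen_zero_left S h0]

lemma basevMul_zero_left (b : ℕ →₀ ℤ) : basevMul S 0 b = 0 := by simp [basevMul]

lemma basevMul_zero_right (a : ℕ →₀ ℤ) : basevMul S a 0 = 0 := by simp [basevMul]

lemma basevMul_add_left (a b c : ℕ →₀ ℤ) :
    basevMul S (a + b) c = basevMul S a c + basevMul S b c := by
  unfold basevMul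
  rw [Finsupp.sum_add_index' (fun s => by simp) (fun s x y => ?_)]
  rw [← Finsupp.sum_add]
  apply Finsupp.sum_congr
  intro t _
  rw [add_mul, add_smul]

lemma basevMul_add_right (a b c : ℕ →₀ ℤ) :
    basevMul S a (b + c) = basevMul S a b + basevMul S a c := by
  unfold basevMul
  rw [← Finsupp.sum_add]
  apply Finsupp.sum_congr
  intro s _
  rw [Finsupp.sum_add_index' (fun t => by simp) (fun t x y => ?_)]
  rw [mul_add, add_smul]

lemma basevMul_smul_left (c : ℤ) (a b : ℕ →₀ ℤ) :
    basevMul S (c • a) b = c • basevMul S a b := by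
  unfold basevMul
  rw [Finsupp.sum_smul_index (fun i => by simp), Finsupp.smul_sum]
  apply Finsupp.sum_congr
  intro s _
  rw [Finsupp.smul_sum]
  apply Finsupp.sum_congr
  intro t _
  rw [smul_smul, mul_assoc]

lemma basevMul_smul_right (c : ℤ) (a b : ℕ →₀ ℤ) :
    basevMul S a (c • b) = c • basevMul S a b := by
  unfold basevMul
  rw [Finsupp.smul_sum]
  apply Finsupp.sum_congr
  intro s _
  rw [Finsupp.sum_smul_index (fun i => by simp), Finsupp.smul_sum]
  apply Finsupp.sum_congr
  intro t _
  rw [smul_smul]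
  ring_nf

lemma basevMul_single_single (s t : ℕ) (x y : ℤ) :
    basevMul S (Finsupp.single s x) (Finsupp.single t y) = (x * y) • basevGen S s t := by
  unfold basevMul
  rw [Finsupp.sum_single_index (by simp), Finsupp.sum_single_index (by simp)]

lemma basevMul_comm (a b : ℕ →₀ ℤ) : basevMul S a b = basevMul S b a := by
  unfold basevMul
  rw [Finsupp.sum_comm]
  apply Finsupp.sum_congr
  intro t _
  apply Finsupp.sum_congr
  intro s _
  rw [mul_comm, basevGen_symm]

lemma basevMulX (h0 : (0:ℕ) ∉ S) (s t : ℕ) :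
    basevMul S (basevX s) (basevX t) = basevGen S s t := by
  unfold basevX
  split_ifs with hs ht ht
  · rw [basevMul_zero_left]; subst hs; exact (basevGen_zero_left S h0 t).symm
  · rw [basevMul_zero_left]; subst hs; exact (basevGen_zero_left S h0 t).symm
  · rw [basevMul_zero_right]; subst ht; exact (basevGen_zero_right S h0 s).symm
  · rw [basevMul_single_single, one_mul, one_smul]

end

noncomputable def basevAux (S : Set ℕ) (s t u : ℕ) : ℕ →₀ ℤ :=
  if min s (min t u) ∈ S ∧ ((s = t ∧ s ≤ u) ∨ (s = u ∧ s ≤ t) ∨ (t = u ∧ t ≤ s)) then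
    (if s = t ∧ t = u then
      (2 : ℤ) • basevX (min s (min t u) - 1) + (2 : ℤ) • basevX (min s (min t u))
    else
      (2 : ℤ) • basevX (min s (min t u) - 1) + (2 : ℤ) • basevX (min s (min t u) + 1))
  else (4 : ℤ) • basevX (min s (min t u))

section
variable (S : Set ℕ)

lemma basevAux_cyc (s t u : ℕ) : basevAux S s t u = basevAux S t u s := by
  unfold basevAux
  rw [show min s (min t u) = min t (min u s) by omega]
  simp only [show ((s = t ∧ s ≤ u) ∨ (s = u ∧ s ≤ t) ∨ (t = u ∧ t ≤ s)) ↔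
      ((t = u ∧ t ≤ s) ∨ (t = s ∧ t ≤ u) ∨ (u = s ∧ u ≤ t)) from by omega,
    show (s = t ∧ t = u) ↔ (t = u ∧ u = s) from by omega]

end

lemma basevL (S : Set ℕ) (hpos : ∀ n ∈ S, 0 < n)
    (hS : ∀ n : ℕ, ¬(n ∈ S ∧ n + 1 ∈ S)) (s t u : ℕ) :
    basevMul S (basevGen S s t) (basevX u) = basevAux S s t u := by
  have h0 : (0:ℕ) ∉ S := fun h => absurd (hpos 0 h) (lt_irrefl 0)
  have gne : ∀ a b : ℕ, a ≠ b → basevGen S a b = (2:ℤ) • basevX (min a b) :=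
    fun a b h => if_neg h
  have gmem : ∀ a : ℕ, a ∈ S → basevGen S a a = basevX (a-1) + basevX (a+1) :=
    fun a h => by simp [basevGen, h]
  have gnot : ∀ a : ℕ, a ∉ S → basevGen S a a = (2:ℤ) • basevX a :=
    fun a h => by simp [basevGen, h]
  by_cases hst : s = t
  · subst hst
    by_cases hsS : s ∈ S
    · have hp : 0 < s := hpos s hsS
      have hm1 : s - 1 ∉ S := fun h => hS (s-1) ⟨h, by rwa [Nat.sub_add_cancel hp]⟩
      have hp1 : s + 1 ∉ S := fun h => hS s ⟨hsS, h⟩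
      rw [gmem s hsS, basevMul_add_left, basevMulX S h0, basevMulX S h0]
      rcases lt_trichotomy u s with hu | hu | hu
      · -- u < s
        have e1 : basevGen S (s-1) u = (2:ℤ) • basevX u := by
          rcases eq_or_ne (s-1) u with h | h
          · rw [← h, gnot _ hm1]
          · rw [gne _ _ h, show min (s-1) u = u by omega]
        have e2 : basevGen S (s+1) u = (2:ℤ) • basevX u := by
          rw [gne _ _ (by omega), show min (s+1) u = u by omega]
        rw [e1, e2, basevAux, if_neg (by rintro ⟨_, h⟩; omega),
          show min s (min s u) = u by omega, ← add_smul]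
        norm_num
      · -- u = s
        subst hu
        rw [gne _ _ (by omega), gne _ _ (by omega), show min (u-1) u = u - 1 by omega,
          show min (u+1) u = u by omega, basevAux,
          if_pos ⟨by rwa [show min u (min u u) = u by omega], Or.inl ⟨rfl, le_refl u⟩⟩,
          if_pos ⟨rfl, rfl⟩, show min u (min u u) = u by omega]
      · -- s < u
        have e1 : basevGen S (s-1) u = (2:ℤ) • basevX (s-1) := by
          rw [gne _ _ (by omega), show min (s-1) u = s - 1 by omega]
        have e2 : basevGen S (s+1) u = (2:ℤ) • basevX (s+1) := by
          rcases eq_or_ne (s+1) u with h | h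
          · rw [← h, gnot _ hp1]
          · rw [gne _ _ h, show min (s+1) u = s + 1 by omega]
        rw [e1, e2, basevAux,
          if_pos ⟨by rwa [show min s (min s u) = s by omega], Or.inl ⟨rfl, by omega⟩⟩,
          if_neg (by rintro ⟨_, h⟩; omega), show min s (min s u) = s by omega]
    · rw [gnot s hsS, basevMul_smul_left, basevMulX S h0]
      by_cases hu : s = u
      · subst hu
        rw [gnot s hsS, basevAux,
          if_neg (by rintro ⟨hmem, _⟩; rw [show min s (min s s) = s by omega] at hmem; exact hsS hmem),
          show min s (min s s) = s by omega, smul_smul]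
        norm_num
      · rw [gne _ _ hu, basevAux, if_neg ?hc, show min s (min s u) = min s u by omega,
          smul_smul]
        · norm_num
        case hc =>
          rintro ⟨hmem, h | h | h⟩
          · rw [show min s (min s u) = s by omega] at hmem; exact hsS hmem
          · exact hu h.1
          · exact hu h.1
  · rw [gne s t hst, basevMul_smul_left, basevMulX S h0]
    by_cases hmu : min s t = u
    · by_cases huS : u ∈ S
      · rw [hmu, gmem u huS, basevAux,
          if_pos ⟨by rwa [show min s (min t u) = u by omega], by omega⟩,
          if_neg (by rintro ⟨h, _⟩; exact hst h), show min s (min t u) = u by omega,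
          smul_add]
      · rw [hmu, gnot u huS, basevAux, if_neg ?hc2, show min s (min t u) = u by omega,
          smul_smul]
        · norm_num
        case hc2 =>
          rintro ⟨hmem, h | h | h⟩
          · exact hst h.1
          · rw [show min s (min t u) = u by omega] at hmem; exact huS hmem
          · rw [show min s (min t u) = u by omega] at hmem; exact huS hmem
    · rw [gne _ _ hmu, basevAux, if_neg (by rintro ⟨_, h⟩; omega),
        show min (min s t) u = min s (min t u) by omega, smul_smul]
      norm_num

lemma basevKey (S : Set ℕ) (hpos : ∀ n ∈ S, 0 < n)
    (hS : ∀ n : ℕ, ¬(n ∈ S ∧ n + 1 ∈ S)) (s t u : ℕ) :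
    basevMul S (basevGen S s t) (basevX u) = basevMul S (basevX s) (basevGen S t u) := by
  rw [basevMul_comm S (basevX s), basevL S hpos hS, basevL S hpos hS, basevAux_cyc]

lemma basevMul_singleX_right (S : Set ℕ) (h0 : (0:ℕ) ∉ S) (a : ℕ →₀ ℤ) (u : ℕ) (z : ℤ) :
    basevMul S a (Finsupp.single u z) = z • basevMul S a (basevX u) := by
  rcases eq_or_ne u 0 with rfl | h
  · have : basevMul S a (Finsupp.single 0 z) = 0 := by
      unfold basevMul
      apply Finset.sum_eq_zero
      intro s _
      dsimp only
      rw [Finsupp.sum_single_index (by simp), basevGen_zero_right S h0, smul_zero]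
    rw [this, show basevX 0 = 0 by simp [basevX], basevMul_zero_right, smul_zero]
  · rw [show (Finsupp.single u z : ℕ →₀ ℤ) = z • basevX u by
      simp [basevX, h, Finsupp.smul_single], basevMul_smul_right]

lemma basevMul_singleX_left (S : Set ℕ) (h0 : (0:ℕ) ∉ S) (b : ℕ →₀ ℤ) (u : ℕ) (z : ℤ) :
    basevMul S (Finsupp.single u z) b = z • basevMul S (basevX u) b := by
  rw [basevMul_comm, basevMul_singleX_right S h0 b u z, basevMul_comm]

lemma basevAssoc (S : Set ℕ) (hpos : ∀ n ∈ S, 0 < n)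
    (hS : ∀ n : ℕ, ¬(n ∈ S ∧ n + 1 ∈ S)) (a b c : ℕ →₀ ℤ) :
    basevMul S (basevMul S a b) c = basevMul S a (basevMul S b c) := by
  have h0 : (0:ℕ) ∉ S := fun h => absurd (hpos 0 h) (lt_irrefl 0)
  induction a using Finsupp.induction_linear with
  | zero => rw [basevMul_zero_left, basevMul_zero_left, basevMul_zero_left]
  | add f g hf hg => rw [basevMul_add_left, basevMul_add_left, basevMul_add_left, hf, hg]
  | single s x =>
    induction b using Finsupp.induction_linear with
    | zero => simp only [basevMul_zero_right, basevMul_zero_left]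
    | add f g hf hg => rw [basevMul_add_right, basevMul_add_left, basevMul_add_left,
        basevMul_add_right, hf, hg]
    | single t y =>
      induction c using Finsupp.induction_linear with
      | zero => rw [basevMul_zero_right, basevMul_zero_right, basevMul_zero_right]
      | add f g hf hg => rw [basevMul_add_right, basevMul_add_right, basevMul_add_right,
          hf, hg]
      | single u z =>
        rw [basevMul_single_single, basevMul_single_single, basevMul_smul_left,
          basevMul_smul_right, basevMul_singleX_right S h0, basevMul_singleX_left S h0,
          basevKey S hpos hS, smul_smul, smul_smul, show x * y * z = y * z * x by ring]

lemma basevF_X (n : ℕ) : basevF (basevX n) = n := by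
  unfold basevF basevX
  split_ifs with h
  · simp [h]
  · rw [Finsupp.sum_single_index (by simp), one_mul]

lemma basevF_add (a b : ℕ →₀ ℤ) : basevF (a + b) = basevF a + basevF b := by
  unfold basevF
  exact Finsupp.sum_add_index' (by simp) (by intros; ring)

lemma basevF_smul (c : ℤ) (a : ℕ →₀ ℤ) : basevF (c • a) = c * basevF a := by
  unfold basevF
  rw [Finsupp.sum_smul_index (by simp), Finsupp.mul_sum]
  apply Finsupp.sum_congr
  intros
  ring

theorem basev_ring_exists' (S : Set ℕ)
    (hpos : ∀ n ∈ S, 0 < n)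
    (hS : ∀ n : ℕ, ¬(n ∈ S ∧ n + 1 ∈ S)) :
    (∀ a b : ℕ →₀ ℤ, basevMul S a b = basevMul S b a) ∧
    (∀ a b c : ℕ →₀ ℤ, basevMul S (basevMul S a b) c = basevMul S a (basevMul S b c)) ∧
    (∀ a b c : ℕ →₀ ℤ, basevMul S a (b + c) = basevMul S a b + basevMul S a c) ∧
    (∀ a b c : ℕ →₀ ℤ, basevMul S (a + b) c = basevMul S a c + basevMul S b c) ∧
    (∀ s t : ℕ, 0 < s → 0 < t →
      basevF (basevMul S (basevX s) (basevX t)) = 2 * min (s : ℤ) (t : ℤ)) := by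
  have h0 : (0:ℕ) ∉ S := fun h => absurd (hpos 0 h) (lt_irrefl 0)
  refine ⟨basevMul_comm S, basevAssoc S hpos hS, basevMul_add_right S, basevMul_add_left S,
    fun s t hs ht => ?_⟩
  rw [basevMulX S h0]
  have hmin : (min s t : ℤ) = min (s:ℤ) (t:ℤ) := by omega
  rcases eq_or_ne s t with rfl | h
  · by_cases hsS : s ∈ S
    · rw [show basevGen S s s = basevX (s-1) + basevX (s+1) by simp [basevGen, hsS],
        basevF_add, basevF_X, basevF_X]
      have : (1:ℕ) ≤ s := hs
      push_cast [Nat.cast_sub this]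
      omega
    · rw [show basevGen S s s = (2:ℤ) • basevX s by simp [basevGen, hsS], basevF_smul,
        basevF_X]
      omega
  · rw [show basevGen S s t = (2:ℤ) • basevX (min s t) from if_neg h, basevF_smul, basevF_X]
    omega

/-- for a set `S` of positive integers with no two consecutive elements, the
free abelian group on `x 1, x 2, …` with multiplication `x s * x t = 2 x_{min s t}` for
`s ≠ t`, `x s * x s = 2 x s` for `s ∉ S`, and `x s * x s = x (s-1) + x (s+1)` for `s ∈ S`
is an associative commutative ring, and the functional `f` with `f (x s) = s` satisfies
`f (x s * x t) = 2 * min s t`. -/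
theorem basev_ring_exists (S : Set ℕ)
    (hpos : ∀ n ∈ S, 0 < n)
    (hS : ∀ n : ℕ, ¬(n ∈ S ∧ n + 1 ∈ S)) :
    (∀ a b : ℕ →₀ ℤ, basevMul S a b = basevMul S b a) ∧
    (∀ a b c : ℕ →₀ ℤ, basevMul S (basevMul S a b) c = basevMul S a (basevMul S b c)) ∧
    (∀ a b c : ℕ →₀ ℤ, basevMul S a (b + c) = basevMul S a b + basevMul S a c) ∧
    (∀ a b c : ℕ →₀ ℤ, basevMul S (a + b) c = basevMul S a c + basevMul S b c) ∧
    (∀ s t : ℕ, 0 < s → 0 < t →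
      basevF (basevMul S (basevX s) (basevX t)) = 2 * min (s : ℤ) (t : ℤ)) := by
  exact basev_ring_exists' S hpos hS
end

section
/- Let k be a field of characteristic p > 0, D = k[t]/(t^p), and J_n = D/(t^n) for 1 ≤ n ≤ p with the tensor product of D-modules given by the primitive comultiplication (Leibniz rule). If n ≤ p and 2n - 1 ≤ p, then J_n ⊗ J_n contains a Jordan block (indecomposable direct summand) of dimension 2n - 1; more precisely, the largest Jordan block in J_n ⊗ J_n has size min(2n - 1, p). -/
open TensorProduct

/-- The `n × n` matrix with ones on the superdiagonal (nilpotent Jordan block). -/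
def shiftMat (k : Type*) [Semiring k] (n : ℕ) : Matrix (Fin n) (Fin n) k :=
  Matrix.of fun i j => if (i : ℕ) + 1 = (j : ℕ) then 1 else 0

lemma shiftMat_pow (k : Type*) [Field k] (n m : ℕ) :
    (shiftMat k n) ^ m = Matrix.of (fun i j : Fin n => if (i : ℕ) + m = (j : ℕ) then (1:k) else 0) := by
  induction m with
  | zero =>
    ext i j
    simp [Matrix.one_apply, Fin.ext_iff]
  | succ m ih =>
    ext i j
    rw [pow_succ, ih]
    simp only [Matrix.mul_apply, shiftMat, Matrix.of_apply]
    rcases lt_or_ge ((i : ℕ) + m) n with h | h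
    · rw [Finset.sum_eq_single (⟨(i : ℕ) + m, h⟩ : Fin n)]
      · rw [if_pos rfl, one_mul]
        by_cases hj : (i : ℕ) + (m + 1) = (j : ℕ)
        · rw [if_pos (by simpa using by omega : ((⟨(i:ℕ)+m, h⟩ : Fin n) : ℕ) + 1 = (j:ℕ)), if_pos hj]
        · rw [if_neg (by simp; omega), if_neg hj]
      · intro b _ hb
        rw [if_neg, zero_mul]
        intro hc
        exact hb (by apply Fin.ext; simp [← hc])
      · intro hc
        exact absurd (Finset.mem_univ _) hc
    · rw [Finset.sum_eq_zero, if_neg (by omega)]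
      intro b _
      rw [if_neg (by omega), zero_mul]

/-- for `D = k[t]/(t^p)` (char `k = p`) and `J_n` the `n`-dimensional
indecomposable `D`-module (`1 ≤ n ≤ p`), the largest Jordan block of `J_n ⊗ J_n` under the
Leibniz action `t ⊗ 1 + 1 ⊗ t` has size `min (2n - 1) p`; in particular if `2n - 1 ≤ p`
then `J_n ⊗ J_n` contains a Jordan block of dimension `2n - 1`.  The largest Jordan block
size of a nilpotent operator is its nilpotency index. -/
theorem jordan_block_tensor_square_nilpotency_index
    (k : Type*) [Field k] (p : ℕ) (hp : p.Prime) [CharP k p]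
    (n : ℕ) (hn1 : 1 ≤ n) (hnp : n ≤ p) :
    let J := (shiftMat k n).mulVecLin
    let TT := LinearMap.rTensor (Fin n → k) J + LinearMap.lTensor (Fin n → k) J
    TT ^ (min (2 * n - 1) p) = 0 ∧ TT ^ (min (2 * n - 1) p - 1) ≠ 0 := by
  intro J TT
  have hp2 := hp.two_le
  set V := (Fin n → k) with hV
  set A := LinearMap.rTensor V J with hA
  set B := LinearMap.lTensor V J with hB
  -- powers of J
  have hJpow : ∀ m : ℕ, J ^ m = ((shiftMat k n) ^ m).mulVecLin := by
    intro m
    induction m with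
    | zero => simp [Matrix.mulVecLin_one, Module.End.one_eq_id]
    | succ m ih =>
      rw [pow_succ, pow_succ, Matrix.mulVecLin_mul, ih, Module.End.mul_eq_comp]
  have hJzero : ∀ m : ℕ, n ≤ m → J ^ m = 0 := by
    intro m hm
    rw [hJpow]
    have : (shiftMat k n) ^ m = 0 := by
      apply pow_eq_zero_of_le hm
      ext i j
      rw [shiftMat_pow]
      simp only [Matrix.of_apply, Matrix.zero_apply]
      rw [if_neg (by omega)]
    rw [this, Matrix.mulVecLin_zero]
  have comm : Commute A B := by
    show A * B = B * A
    rw [Module.End.mul_eq_comp, Module.End.mul_eq_comp, hA, hB,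
      LinearMap.rTensor_comp_lTensor, LinearMap.lTensor_comp_rTensor]
  have hAB : ∀ i j : ℕ, A ^ i * B ^ j = TensorProduct.map (J ^ i) (J ^ j) := by
    intro i j
    rw [hA, hB, LinearMap.rTensor_pow, LinearMap.lTensor_pow, Module.End.mul_eq_comp,
      LinearMap.rTensor_comp_lTensor]
  have hTTpow : ∀ m : ℕ, TT ^ m =
      ∑ i ∈ Finset.range (m + 1), ((m.choose i : k)) • TensorProduct.map (J ^ i) (J ^ (m - i)) := by
    intro m
    have : TT = A + B := rfl
    rw [this, comm.add_pow]
    refine Finset.sum_congr rfl fun i _ => ?_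
    rw [hAB, ← (Nat.cast_commute (m.choose i)
      (TensorProduct.map (J ^ i) (J ^ (m - i)))).eq, ← nsmul_eq_mul,
      ← Nat.cast_smul_eq_nsmul k]
  set M := min (2 * n - 1) p with hM
  have hMcases : M = 2 * n - 1 ∨ M = p := by omega
  constructor
  · -- vanishing
    rw [hTTpow M]
    apply Finset.sum_eq_zero
    intro i hi
    simp only [Finset.mem_range] at hi
    by_cases h1 : n ≤ i
    · rw [hJzero i h1, TensorProduct.map_zero_left, smul_zero]
    · by_cases h2 : n ≤ M - i
      · rw [hJzero _ h2, TensorProduct.map_zero_right, smul_zero]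
      · -- i ≤ n-1, M - i ≤ n-1, hence M = p and 0 < i < p
        have hMp : M = p := by omega
        have hi0 : i ≠ 0 := by omega
        have hipp : i < p := by omega
        have hdvd : p ∣ M.choose i := by
          rw [hMp]; exact hp.dvd_choose_self hi0 hipp
        rw [(CharP.cast_eq_zero_iff k p _).mpr hdvd, zero_smul]
  · -- nonzero
    set m := M - 1 with hm
    have hm1 : n - 1 ≤ m := by omega
    have hm2 : m ≤ 2 * n - 2 := by omega
    have hmp : m < p := by omega
    set e : V := Pi.single (⟨n - 1, by omega⟩ : Fin n) 1 with he
    have hJe : ∀ (a : ℕ) (r : Fin n), (J ^ a) e r = if (r : ℕ) + a = n - 1 then 1 else 0 := by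
      intro a r
      rw [hJpow, Matrix.mulVecLin_apply, he, Matrix.mulVec_single, shiftMat_pow]
      simp only [Pi.smul_apply, Matrix.col_apply, MulOpposite.op_one, one_smul, Matrix.of_apply, mul_one]
    set i0 : Fin n := ⟨0, by omega⟩ with hi0
    set j0 : Fin n := ⟨2 * n - 2 - m, by omega⟩ with hj0
    set φ : V ⊗[k] V →ₗ[k] k :=
      TensorProduct.lift ((LinearMap.mul k k).compl₁₂ (LinearMap.proj i0) (LinearMap.proj j0))
      with hφ
    have hφtmul : ∀ u v : V, φ (u ⊗ₜ v) = u i0 * v j0 := fun u v => rfl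
    have key : φ ((TT ^ m) (e ⊗ₜ e)) = (m.choose (n - 1) : k) := by
      rw [hTTpow m, LinearMap.sum_apply, map_sum]
      rw [Finset.sum_eq_single_of_mem (n - 1) (by simp; omega)]
      · rw [LinearMap.smul_apply, map_smul, TensorProduct.map_tmul, hφtmul, hJe, hJe,
          if_pos (by simp [hi0]), if_pos (by simp [hj0]; omega), mul_one, smul_eq_mul, mul_one]
      · intro b _ hb
        rw [LinearMap.smul_apply, map_smul, TensorProduct.map_tmul, hφtmul, hJe,
          if_neg (by simp [hi0]; omega), zero_mul, smul_zero]
    have hchoose : (m.choose (n - 1) : k) ≠ 0 := by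
      rw [Ne, CharP.cast_eq_zero_iff k p]
      intro hdvd
      have h1 : p ∣ m.factorial := by
        rw [← Nat.choose_mul_factorial_mul_factorial hm1]
        exact (hdvd.mul_right _).mul_right _
      exact absurd ((Nat.Prime.dvd_factorial hp).mp h1) (by omega)
    intro hzero
    rw [hzero] at key
    simp only [LinearMap.zero_apply, map_zero] at key
    exact hchoose key.symm
end

section
/- Let k be a field of characteristic 2 and A = k[x,y]/(x²,y²). For a point p = [a:b] ∈ P¹(k), choose s₂ = a x + b y and s₁ = c x + d y with {s₁,s₂} a basis of the span of x,y. For n ≥ 1, let V_{2n}(p) be the 2n-dimensional A-module on M_ℓ ⊕ M_u (each of dimension n) where s₁ acts by the block matrix with identity I_n in the upper right block and zeros elsewhere, and s₂ acts with the nilpotent Jordan block N_n (rank n-1) in the upper right block and zeros elsewhere. Then V_{2n}(p) is an indecomposable A-module. -/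
set_option maxHeartbeats 1000000

section MatLemma

variable {k : Type*} [Field k] {n : ℕ}

lemma mulS_apply (M : Matrix (Fin n) (Fin n) k) (i j : Fin n) :
    (M * shiftMat k n) i j =
      if h : 0 < (j : ℕ) then M i ⟨(j : ℕ) - 1, by omega⟩ else 0 := by
  rw [Matrix.mul_apply]
  split_ifs with h
  · rw [Finset.sum_eq_single (⟨(j : ℕ) - 1, by omega⟩ : Fin n)]
    · simp only [shiftMat, Matrix.of_apply, Fin.val_mk]
      rw [if_pos (by omega), mul_one]
    · intro b _ hb
      have hbv : (b : ℕ) + 1 ≠ (j : ℕ) := by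
        intro hb'
        exact hb (Fin.ext (by simp only [Fin.val_mk]; omega))
      simp only [shiftMat, Matrix.of_apply]
      rw [if_neg hbv, mul_zero]
    · intro hmem; exact absurd (Finset.mem_univ _) hmem
  · apply Finset.sum_eq_zero
    intro l _
    simp only [shiftMat, Matrix.of_apply]
    rw [if_neg (by omega), mul_zero]

lemma sMul_apply (M : Matrix (Fin n) (Fin n) k) (i j : Fin n) :
    (shiftMat k n * M) i j =
      if h : (i : ℕ) + 1 < n then M ⟨(i : ℕ) + 1, h⟩ j else 0 := by
  rw [Matrix.mul_apply]
  split_ifs with h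
  · rw [Finset.sum_eq_single (⟨(i : ℕ) + 1, h⟩ : Fin n)]
    · simp only [shiftMat, Matrix.of_apply, Fin.val_mk]
      rw [if_pos trivial, one_mul]
    · intro b _ hb
      have hbv : (i : ℕ) + 1 ≠ (b : ℕ) := by
        intro hb'
        exact hb (Fin.ext (by simp only [Fin.val_mk]; omega))
      simp only [shiftMat, Matrix.of_apply]
      rw [if_neg hbv, zero_mul]
    · intro hmem; exact absurd (Finset.mem_univ _) hmem
  · apply Finset.sum_eq_zero
    intro l _
    simp only [shiftMat, Matrix.of_apply]
    rw [if_neg (by omega), zero_mul]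

lemma matrix_lemma [CharP k 2] (M : Matrix (Fin n) (Fin n) k)
    (hc : M * shiftMat k n = shiftMat k n * M) (hi : M * M = M) :
    M = 0 ∨ M = 1 := by
  rcases Nat.eq_zero_or_pos n with h0 | h0
  · left; ext i j; exact absurd i.2 (by omega)
  have congrM : ∀ (i j i' j' : Fin n), (i : ℕ) = (i' : ℕ) → (j : ℕ) = (j' : ℕ) →
      M i j = M i' j' := by
    intro i j i' j' h1 h2
    rw [Fin.ext h1, Fin.ext h2]
  have hcC : ∀ i j : Fin n, (M * shiftMat k n) i j = (shiftMat k n * M) i j :=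
    fun i j => by rw [hc]
  -- Toeplitz step, ℕ-indexed
  have step : ∀ (a b : ℕ) (ha : a + 1 < n) (hb : b + 1 < n),
      M ⟨a + 1, ha⟩ ⟨b + 1, hb⟩ = M ⟨a, by omega⟩ ⟨b, by omega⟩ := by
    intro a b ha hb
    have e1 := hcC ⟨a, by omega⟩ ⟨b + 1, hb⟩
    rw [mulS_apply, sMul_apply] at e1
    rw [dif_pos (by simp only [Fin.val_mk]; omega), dif_pos (by simp only [Fin.val_mk]; omega)] at e1
    refine Eq.trans ?_ (Eq.trans e1.symm ?_)
    · exact congrM _ _ _ _ (by simp only [Fin.val_mk]) (by simp only [Fin.val_mk])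
    · exact congrM _ _ _ _ (by simp only [Fin.val_mk]) (by simp only [Fin.val_mk]; omega)
  -- first column below diagonal, ℕ-indexed
  have col0 : ∀ (a : ℕ) (ha : a + 1 < n), M ⟨a + 1, ha⟩ ⟨0, h0⟩ = 0 := by
    intro a ha
    have e1 := hcC ⟨a, by omega⟩ ⟨0, h0⟩
    rw [mulS_apply, sMul_apply] at e1
    rw [dif_neg (by simp), dif_pos (by simp only [Fin.val_mk]; omega)] at e1
    refine Eq.trans ?_ e1.symm
    exact congrM _ _ _ _ (by simp only [Fin.val_mk]) rfl
  -- lower triangle is zero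
  have low : ∀ (m : ℕ) (i j : Fin n), (j : ℕ) = m → (j : ℕ) < (i : ℕ) → M i j = 0 := by
    intro m
    induction m with
    | zero =>
      intro i j hj hlt
      have h1 : M i j = M ⟨((i : ℕ) - 1) + 1, by omega⟩ ⟨0, h0⟩ :=
        congrM _ _ _ _ (by simp only [Fin.val_mk]; omega) (by simp only [Fin.val_mk]; omega)
      rw [h1]
      exact col0 ((i : ℕ) - 1) _
    | succ m ih =>
      intro i j hj hlt
      have h1 : M i j = M ⟨((i : ℕ) - 1) + 1, by omega⟩ ⟨((j : ℕ) - 1) + 1, by omega⟩ :=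
        congrM _ _ _ _ (by simp only [Fin.val_mk]; omega) (by simp only [Fin.val_mk]; omega)
      rw [h1, step]
      exact ih _ _ (by simp only [Fin.val_mk]; omega) (by simp only [Fin.val_mk]; omega)
  -- Toeplitz: M i j = M 0 (j - i) for i ≤ j
  have toe : ∀ (m : ℕ) (i j : Fin n), (i : ℕ) = m → (i : ℕ) ≤ (j : ℕ) →
      M i j = M ⟨0, h0⟩ ⟨(j : ℕ) - (i : ℕ), by omega⟩ := by
    intro m
    induction m with
    | zero =>
      intro i j hi hle
      exact congrM _ _ _ _ (by simp only [Fin.val_mk]; omega) (by simp only [Fin.val_mk]; omega)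
    | succ m ih =>
      intro i j hi hle
      have h1 : M i j = M ⟨((i : ℕ) - 1) + 1, by omega⟩ ⟨((j : ℕ) - 1) + 1, by omega⟩ :=
        congrM _ _ _ _ (by simp only [Fin.val_mk]; omega) (by simp only [Fin.val_mk]; omega)
      rw [h1, step]
      refine Eq.trans (ih _ _ (by simp only [Fin.val_mk]; omega) (by simp only [Fin.val_mk]; omega)) ?_
      exact congrM _ _ _ _ rfl (by simp only [Fin.val_mk]; omega)
  set z : Fin n := ⟨0, h0⟩ with hz
  have hiC : ∀ i j : Fin n, ∑ l, M i l * M l j = M i j := by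
    intro i j
    have := congrFun (congrFun hi i) j
    rw [← this, Matrix.mul_apply]
  have hdiag : M z z * M z z = M z z := by
    have e := hiC z z
    rw [Finset.sum_eq_single z] at e
    · exact e
    · intro b _ hb
      have hb0 : (0 : ℕ) < (b : ℕ) := by
        rcases Nat.eq_zero_or_pos (b : ℕ) with h | h
        · exact absurd (Fin.ext h : b = z) hb
        · exact h
      rw [low (z : ℕ) b z rfl hb0, mul_zero]
    · intro hmem; exact absurd (Finset.mem_univ _) hmem
  -- superdiagonal entries vanish (char 2 + strong induction)
  have sup0 : ∀ (m : ℕ) (j : Fin n), (j : ℕ) = m → 0 < (j : ℕ) → M z j = 0 := by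
    intro m
    induction m using Nat.strong_induction_on with
    | _ m ihs =>
      intro j hj hjpos
      have hzj : z ≠ j := by
        intro h
        rw [← h] at hjpos
        simp [hz] at hjpos
      have e := hiC z j
      have hsplit : ∀ l ∈ Finset.univ, l ∉ ({z, j} : Finset (Fin n)) → M z l * M l j = 0 := by
        intro l _ hl
        simp only [Finset.mem_insert, Finset.mem_singleton] at hl
        push_neg at hl
        obtain ⟨hl1, hl2⟩ := hl
        rcases lt_trichotomy (l : ℕ) (j : ℕ) with h | h | h
        · have hl0 : 0 < (l : ℕ) := by
            rcases Nat.eq_zero_or_pos (l : ℕ) with h' | h'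
            · exact absurd (Fin.ext h' : l = z) hl1
            · exact h'
          rw [ihs (l : ℕ) (by omega) l rfl hl0, zero_mul]
        · exact absurd (Fin.ext h : l = j) hl2
        · rw [low (j : ℕ) l j rfl h, mul_zero]
      rw [← Finset.sum_subset (Finset.subset_univ ({z, j} : Finset (Fin n))) hsplit] at e
      rw [Finset.sum_pair hzj] at e
      have hjj : M j j = M z z := by
        refine Eq.trans (toe (j : ℕ) j j rfl le_rfl) ?_
        exact congrM _ _ _ _ rfl (by simp [hz])
      rw [hjj, mul_comm (M z j) (M z z)] at e
      have h2 : (2 : k) = 0 := CharP.cast_eq_zero k 2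
      have e2 : (2 : k) * (M z z * M z j) = M z j := by rw [two_mul]; exact e
      rw [h2, zero_mul] at e2
      exact e2.symm
  have hall : ∀ i j : Fin n, M i j = if (i : ℕ) = (j : ℕ) then M z z else 0 := by
    intro i j
    rcases lt_trichotomy (i : ℕ) (j : ℕ) with h | h | h
    · rw [if_neg (by omega), toe (i : ℕ) i j rfl (le_of_lt h)]
      exact sup0 ((j : ℕ) - (i : ℕ)) _ (by simp only [Fin.val_mk]) (by simp only [Fin.val_mk]; omega)
    · rw [if_pos h, toe (i : ℕ) i j rfl (le_of_eq h)]
      exact congrM _ _ _ _ rfl (by simp [hz, h])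
    · rw [if_neg (by omega)]
      exact low (j : ℕ) i j rfl h
  have hd01 : M z z = 0 ∨ M z z = 1 := by
    have h' : M z z * (M z z - 1) = 0 := by
      rw [mul_sub, mul_one, hdiag, sub_self]
    rcases mul_eq_zero.mp h' with h | h
    · exact Or.inl h
    · exact Or.inr (sub_eq_zero.mp h)
  rcases hd01 with hd | hd
  · left
    ext i j
    rw [hall i j, hd]
    simp
  · right
    ext i j
    rw [hall i j, hd, Matrix.one_apply]
    simp only [Fin.ext_iff]

end MatLemma


/-- Bašev: over an algebraically closed field of characteristic 2, the
`2n`-dimensional module `V_{2n}(p)` over `A = k[x,y]/(x²,y²)`, given on `M_ℓ ⊕ M_u`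
(each of dimension `n`) by `s₁ ↦ [[0, I_n],[0,0]]` and `s₂ ↦ [[0, N_n],[0,0]]`,
is indecomposable: any two invariant submodules intersecting trivially and spanning
everything must include a trivial one. -/
theorem basev_module_indecomposable
    (k : Type*) [Field k] [IsAlgClosed k] [CharP k 2] (n : ℕ) (hn : 1 ≤ n) :
    let V := (Fin n → k) × (Fin n → k)
    let S1 : V →ₗ[k] V :=
      LinearMap.prod (LinearMap.snd k (Fin n → k) (Fin n → k)) 0
    let S2 : V →ₗ[k] V :=
      LinearMap.prod ((shiftMat k n).mulVecLin ∘ₗ LinearMap.snd k (Fin n → k) (Fin n → k)) 0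
    ∀ W₁ W₂ : Submodule k V,
      (∀ v ∈ W₁, S1 v ∈ W₁) → (∀ v ∈ W₁, S2 v ∈ W₁) →
      (∀ v ∈ W₂, S1 v ∈ W₂) → (∀ v ∈ W₂, S2 v ∈ W₂) →
      W₁ ⊓ W₂ = ⊥ → W₁ ⊔ W₂ = ⊤ → W₁ = ⊥ ∨ W₂ = ⊥ := by
  intro V S1 S2 W₁ W₂ h11 h12 h21 h22 hinf hsup
  have hcompl : IsCompl W₁ W₂ := ⟨disjoint_iff.mpr hinf, codisjoint_iff.mpr hsup⟩
  set φ : V →ₗ[k] V := W₁.subtype ∘ₗ W₁.projectionOnto W₂ hcompl with hφ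
  have φmem : ∀ v : V, φ v ∈ W₁ := fun v => (W₁.projectionOnto W₂ hcompl v).2
  have φleft : ∀ v ∈ W₁, φ v = v := by
    intro v hv
    have := Submodule.linearProjOfIsCompl_apply_left hcompl ⟨v, hv⟩
    simp only [hφ, LinearMap.comp_apply, Submodule.subtype_apply]
    rw [this]
  have φright : ∀ v ∈ W₂, φ v = 0 := by
    intro v hv
    have := Submodule.linearProjOfIsCompl_apply_right' hcompl hv
    simp only [hφ, LinearMap.comp_apply, Submodule.subtype_apply]
    rw [this]; rfl
  have hdecomp : ∀ v : V, ∃ a ∈ W₁, ∃ b ∈ W₂, a + b = v := by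
    intro v
    have : v ∈ W₁ ⊔ W₂ := by rw [hsup]; trivial
    exact Submodule.mem_sup.mp this
  have hcomm : ∀ (S : V →ₗ[k] V), (∀ v ∈ W₁, S v ∈ W₁) → (∀ v ∈ W₂, S v ∈ W₂) →
      ∀ v, φ (S v) = S (φ v) := by
    intro S hS1 hS2 v
    obtain ⟨a, ha, b, hb, rfl⟩ := hdecomp v
    rw [map_add, map_add, map_add, φleft a ha, φright b hb,
      φleft _ (hS1 a ha), φright _ (hS2 b hb), add_zero, map_add, map_zero, add_zero]
  have hcomm1 := hcomm S1 h11 h21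
  have hcomm2 := hcomm S2 h12 h22
  set A : (Fin n → k) →ₗ[k] (Fin n → k) :=
    (LinearMap.fst k (Fin n → k) (Fin n → k)) ∘ₗ φ ∘ₗ (LinearMap.inl k (Fin n → k) (Fin n → k))
    with hA
  have hAapp : ∀ x : Fin n → k, A x = (φ (x, 0)).1 := fun x => rfl
  have hS1app : ∀ v : V, S1 v = (v.2, 0) := fun v => rfl
  have hS2app : ∀ v : V, S2 v = ((shiftMat k n).mulVecLin v.2, 0) := fun v => rfl
  -- fact: φ (y, 0) = ((φ (x,y)).2, 0) for all x y
  have key : ∀ v : V, φ (v.2, 0) = ((φ v).2, 0) := by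
    intro v
    have := hcomm1 v
    rw [hS1app v, hS1app (φ v)] at this
    exact this
  have fact2 : ∀ v : V, (φ v).2 = A v.2 := by
    intro v
    have := congrArg Prod.fst (key v)
    rw [hAapp]
    exact this.symm
  have fact1 : ∀ x : Fin n → k, (φ (x, 0)).2 = 0 := by
    intro x
    have := congrArg Prod.snd (key (0, x))
    simpa using this
  have φpair : ∀ x : Fin n → k, φ (x, 0) = (A x, 0) := by
    intro x
    exact Prod.ext (hAapp x).symm (fact1 x)
  -- A commutes with N
  have hAN : ∀ y : Fin n → k,
      A ((shiftMat k n).mulVecLin y) = (shiftMat k n).mulVecLin (A y) := by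
    intro y
    have := hcomm2 (0, y)
    rw [hS2app (0, y), hS2app (φ (0, y))] at this
    have h1 := congrArg Prod.fst this
    simp only at h1
    rw [φpair ((shiftMat k n).mulVecLin y)] at h1
    rw [fact2 (0, y)] at h1
    exact h1
  -- A is idempotent
  have hφidem : ∀ v : V, φ (φ v) = φ v := fun v => φleft (φ v) (φmem v)
  have hAA : ∀ x : Fin n → k, A (A x) = A x := by
    intro x
    have := hφidem (x, 0)
    rw [φpair x, φpair (A x)] at this
    exact (Prod.ext_iff.mp this).1
  -- convert to matrices
  set M : Matrix (Fin n) (Fin n) k := LinearMap.toMatrix' A with hM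
  have hMc : M * shiftMat k n = shiftMat k n * M := by
    have h1 : A ∘ₗ (shiftMat k n).mulVecLin = (shiftMat k n).mulVecLin ∘ₗ A :=
      LinearMap.ext fun y => hAN y
    have h2 := congrArg LinearMap.toMatrix' h1
    rw [LinearMap.toMatrix'_comp, LinearMap.toMatrix'_comp] at h2
    rw [← Matrix.toLin'_apply'] at h2
    rw [LinearMap.toMatrix'_toLin'] at h2
    exact h2
  have hMM : M * M = M := by
    have h1 : A ∘ₗ A = A := LinearMap.ext fun y => hAA y
    have h2 := congrArg LinearMap.toMatrix' h1
    rw [LinearMap.toMatrix'_comp] at h2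
    exact h2
  rcases matrix_lemma M hMc hMM with h | h
  · -- A = 0, so W₁ = ⊥
    have hA0 : A = 0 := by
      have := congrArg Matrix.toLin' h
      rw [Matrix.toLin'_toMatrix'] at this
      simpa using this
    left
    rw [Submodule.eq_bot_iff]
    intro w hw
    have hw2 : w.2 = 0 := by
      have := fact2 w
      rw [φleft w hw, hA0] at this
      simpa using this
    have hweq : w = (w.1, 0) := Prod.ext rfl hw2
    have : φ w = w := φleft w hw
    rw [hweq, φpair, hA0] at this
    rw [hweq, ← this]
    simp
    exact rfl
  · -- A = id, so W₂ = ⊥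
    have hA1 : A = LinearMap.id := by
      have := congrArg Matrix.toLin' h
      rw [Matrix.toLin'_toMatrix', Matrix.toLin'_one] at this
      exact this
    right
    rw [Submodule.eq_bot_iff]
    intro w hw
    have hφw : φ w = 0 := φright w hw
    have hw2 : w.2 = 0 := by
      have := fact2 w
      rw [hφw, hA1] at this
      simpa using this.symm
    have hweq : w = (w.1, 0) := Prod.ext rfl hw2
    have : φ w = (w.1, 0) := by
      rw [hweq, φpair, hA1]; rfl
    rw [hweq]
    rw [hφw] at this
    exact this.symm
end

section
/- Let k be a field of characteristic 2 and consider the n² × n² matrix T = I_n ⊗ N_n + N_n ⊗ I_n (Kronecker sum of the identity with the size-n nilpotent upper-triangular Jordan block). Then rank(T) = n² − n. -/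
open Matrix

section aux
variable {k : Type*} [Field k] [CharP k 2] {n : ℕ}

omit [CharP k 2] in
lemma shift_sum (y : Fin n → k) (b : Fin n) :
    (∑ d : Fin n, (if (b : ℕ) + 1 = (d : ℕ) then 1 else 0) * y d)
    = if h : (b : ℕ) + 1 < n then y ⟨(b : ℕ) + 1, h⟩ else 0 := by
  split_ifs with h
  · rw [Finset.sum_eq_single (⟨(b : ℕ) + 1, h⟩ : Fin n)]
    · simp
    · intro d _ hd
      rw [if_neg, zero_mul]
      intro he
      exact hd (Fin.ext he.symm)
    · simp
  · apply Finset.sum_eq_zero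
    intro d _
    rw [if_neg, zero_mul]
    intro he
    exact h (he ▸ d.isLt)

omit [CharP k 2] in
lemma mulVec_apply' (x : Fin n × Fin n → k) (a b : Fin n) :
    ((Matrix.kroneckerMap (· * ·) (1 : Matrix (Fin n) (Fin n) k) (shiftMat k n) +
      Matrix.kroneckerMap (· * ·) (shiftMat k n) (1 : Matrix (Fin n) (Fin n) k)).mulVec x) (a, b)
    = (if h : (b : ℕ) + 1 < n then x (a, ⟨(b : ℕ) + 1, h⟩) else 0)
      + (if h : (a : ℕ) + 1 < n then x (⟨(a : ℕ) + 1, h⟩, b) else 0) := by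
  simp only [Matrix.mulVec, dotProduct, Matrix.add_apply, Matrix.kroneckerMap_apply,
    Matrix.one_apply, shiftMat, Matrix.of_apply, add_mul, Finset.sum_add_distrib]
  congr 1
  · rw [Fintype.sum_prod_type]
    rw [Finset.sum_eq_single a]
    · rw [← shift_sum (fun d => x (a, d)) b]
      simp [mul_assoc]
    · intro c _ hc
      apply Finset.sum_eq_zero
      intro d _
      rw [if_neg (fun h => hc h.symm), zero_mul, zero_mul]
    · simp
  · rw [Fintype.sum_prod_type_right]
    rw [Finset.sum_eq_single b]
    · rw [← shift_sum (fun c => x (c, b)) a]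
      apply Finset.sum_congr rfl
      intro c _
      simp [mul_comm, mul_assoc]
    · intro d _ hd
      apply Finset.sum_eq_zero
      intro c _
      simp [Ne.symm hd]
    · simp

/-- the "constant on antidiagonals, zero past the main antidiagonal" embedding -/
def phiMap (k : Type*) [Field k] (n : ℕ) : (Fin n → k) →ₗ[k] (Fin n × Fin n → k) where
  toFun f p := if h : (p.1 : ℕ) + (p.2 : ℕ) < n then f ⟨(p.1 : ℕ) + (p.2 : ℕ), h⟩ else 0
  map_add' f g := by
    funext p
    by_cases h : (p.1 : ℕ) + (p.2 : ℕ) < n <;> simp [h]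
  map_smul' c f := by
    funext p
    by_cases h : (p.1 : ℕ) + (p.2 : ℕ) < n <;> simp [h]

end aux

/-- over a field of characteristic 2, the Kronecker sum
`T = I_n ⊗ N_n + N_n ⊗ I_n` has rank `n² − n`. -/
theorem rank_kronecker_sum_char_two
    (k : Type*) [Field k] [CharP k 2] (n : ℕ) :
    (Matrix.kroneckerMap (· * ·) (1 : Matrix (Fin n) (Fin n) k) (shiftMat k n) +
      Matrix.kroneckerMap (· * ·) (shiftMat k n) (1 : Matrix (Fin n) (Fin n) k)).rank
      = n ^ 2 - n := by
  set A := Matrix.kroneckerMap (· * ·) (1 : Matrix (Fin n) (Fin n) k) (shiftMat k n) +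
      Matrix.kroneckerMap (· * ·) (shiftMat k n) (1 : Matrix (Fin n) (Fin n) k) with hA
  have hker : LinearMap.ker A.mulVecLin = LinearMap.range (phiMap k n) := by
    apply le_antisymm
    · intro x hx
      have hx0 : A.mulVec x = 0 := hx
      have rel : ∀ a b : Fin n,
          (if h : (b : ℕ) + 1 < n then x (a, ⟨(b : ℕ) + 1, h⟩) else 0)
          = (if h : (a : ℕ) + 1 < n then x (⟨(a : ℕ) + 1, h⟩, b) else 0) := by
        intro a b
        have h1 : ((A.mulVec x) (a, b) : k) = 0 := by rw [hx0]; rfl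
        rw [mulVec_apply'] at h1
        have := eq_neg_of_add_eq_zero_left h1
        rwa [CharTwo.neg_eq] at this
      -- zero beyond the main antidiagonal
      have claimA : ∀ m : ℕ, ∀ a b : Fin n, (b : ℕ) = m → n ≤ (a : ℕ) + (b : ℕ) →
          x (a, b) = 0 := by
        intro m
        induction m with
        | zero => intro a b hb hge; have := a.isLt; omega
        | succ m ih =>
          intro a b hb hge
          have hm : m < n := by have := b.isLt; omega
          have r := rel a ⟨m, hm⟩
          have hm1 : m + 1 < n := by rw [← hb]; exact b.isLt
          rw [dif_pos hm1] at r
          have hb' : (⟨m + 1, hm1⟩ : Fin n) = b := by apply Fin.ext; simp [hb]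
          rw [hb'] at r
          rw [r]
          split_ifs with ha
          · exact ih ⟨(a : ℕ) + 1, ha⟩ ⟨m, hm⟩ rfl (by simp; omega)
          · rfl
      -- constant on antidiagonals
      have claimB : ∀ m : ℕ, ∀ (a b : Fin n) (h : (a : ℕ) + (b : ℕ) < n), (b : ℕ) = m →
          x (a, b) = x (⟨(a : ℕ) + (b : ℕ), h⟩, ⟨0, Nat.lt_of_le_of_lt (Nat.zero_le _) h⟩) := by
        intro m
        induction m with
        | zero =>
          intro a b h hb
          congr 1
          apply Prod.ext <;> apply Fin.ext <;> simp [hb]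
        | succ m ih =>
          intro a b h hb
          have hm : m < n := by have := b.isLt; omega
          have r := rel a ⟨m, hm⟩
          have hm1 : m + 1 < n := by rw [← hb]; exact b.isLt
          have ha1 : (a : ℕ) + 1 < n := by omega
          rw [dif_pos hm1, dif_pos ha1] at r
          have hb' : (⟨m + 1, hm1⟩ : Fin n) = b := by apply Fin.ext; simp [hb]
          rw [hb'] at r
          have h2 : ((⟨(a : ℕ) + 1, ha1⟩ : Fin n) : ℕ) + ((⟨m, hm⟩ : Fin n) : ℕ) < n := by
            simp; omega
          have := ih ⟨(a : ℕ) + 1, ha1⟩ ⟨m, hm⟩ h2 rfl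
          rw [r, this]
          congr 1
          apply Prod.ext <;> (apply Fin.ext; simp [hb]; try omega)
      refine ⟨fun i => x (i, ⟨0, i.pos⟩), ?_⟩
      funext p
      obtain ⟨a, b⟩ := p
      show (if h : (a : ℕ) + (b : ℕ) < n then _ else 0) = x (a, b)
      split_ifs with h
      · have := claimB (b : ℕ) a b h rfl
        rw [this]
      · exact (claimA (b : ℕ) a b rfl (by omega)).symm
    · rintro x ⟨f, rfl⟩
      show A.mulVec (phiMap k n f) = 0
      funext p
      obtain ⟨a, b⟩ := p
      rw [mulVec_apply']
      show (if h : (b : ℕ) + 1 < n then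
              (if h2 : (a : ℕ) + ((b : ℕ) + 1) < n then f ⟨_, h2⟩ else 0) else 0)
          + (if h : (a : ℕ) + 1 < n then
              (if h2 : ((a : ℕ) + 1) + (b : ℕ) < n then f ⟨_, h2⟩ else 0) else 0) = (0 : k)
      by_cases h : (a : ℕ) + (b : ℕ) + 1 < n
      · rw [dif_pos (by omega : (b : ℕ) + 1 < n), dif_pos (by omega),
          dif_pos (by omega : (a : ℕ) + 1 < n), dif_pos (by omega)]
        have : (⟨(a : ℕ) + ((b : ℕ) + 1), by omega⟩ : Fin n)
            = ⟨((a : ℕ) + 1) + (b : ℕ), by omega⟩ := by apply Fin.ext; simp; omega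
        rw [this]
        exact CharTwo.add_self_eq_zero _
      · have e1 : (if h : (b : ℕ) + 1 < n then
              (if h2 : (a : ℕ) + ((b : ℕ) + 1) < n then f ⟨_, h2⟩ else 0) else 0) = (0:k) := by
          split_ifs with h1 h2
          · omega
          · rfl
          · rfl
        have e2 : (if h : (a : ℕ) + 1 < n then
              (if h2 : ((a : ℕ) + 1) + (b : ℕ) < n then f ⟨_, h2⟩ else 0) else 0) = (0:k) := by
          split_ifs with h1 h2
          · omega
          · rfl
          · rfl
        rw [e1, e2, add_zero]
  have hinj : Function.Injective (phiMap k n) := by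
    intro f g hfg
    funext i
    have := congrFun hfg (i, ⟨0, i.pos⟩)
    have hlt : (i : ℕ) + ((⟨0, i.pos⟩ : Fin n) : ℕ) < n := by simp
    simp only [phiMap, LinearMap.coe_mk, AddHom.coe_mk, dif_pos hlt] at this
    have he : (⟨(i : ℕ) + ((⟨0, i.pos⟩ : Fin n) : ℕ), hlt⟩ : Fin n) = i := by
      apply Fin.ext; simp
    rwa [he] at this
  have hkerdim : Module.finrank k (LinearMap.ker A.mulVecLin) = n := by
    rw [hker, LinearMap.finrank_range_of_inj hinj, Module.finrank_pi, Fintype.card_fin]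
  have hrn := LinearMap.finrank_range_add_finrank_ker A.mulVecLin
  rw [hkerdim, Module.finrank_pi, Fintype.card_prod, Fintype.card_fin] at hrn
  have : A.rank = Module.finrank k (LinearMap.range A.mulVecLin) := rfl
  rw [this]
  have hnn : n * n = n ^ 2 := by ring
  omega
end

section
/- Let k be a field of characteristic p > 0, A = k[x,y]/(x^p, y^p) with x, y primitive (group algebra of G_{a(1)}²). For a point p = [a:b], let V(p) = A ⊗_{k[t]/(t^p)} k be the p-dimensional module induced along t ↦ a x + b y from the trivial module. Then V(p) ⊗̃ V(p) ≅ p·V(p), where ⊗̃ is the tensor product associated to the primitive (Lie) comultiplication. -/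
open TensorProduct

namespace IndTensorSq

open Finset

variable {k : Type*} [Field k] {p : ℕ}

/-- guarded access -/
def gd (p : ℕ) (f : Fin p → Fin p → k) (a b : ℕ) : k :=
  if h : a < p ∧ b < p then f ⟨a, h.1⟩ ⟨b, h.2⟩ else 0

lemma gd_lt (f : Fin p → Fin p → k) {a b : ℕ} (h1 : a < p) (h2 : b < p) :
    gd p f a b = f ⟨a, h1⟩ ⟨b, h2⟩ := by simp [gd, h1, h2]

lemma gd_left_ge (f : Fin p → Fin p → k) {a : ℕ} (h : p ≤ a) (b : ℕ) :
    gd p f a b = 0 := by simp [gd]; omega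

lemma gd_right_ge (f : Fin p → Fin p → k) (a : ℕ) {b : ℕ} (h : p ≤ b) :
    gd p f a b = 0 := by simp [gd]; omega

lemma gd_add (f g : Fin p → Fin p → k) (a b : ℕ) :
    gd p (f + g) a b = gd p f a b + gd p g a b := by
  unfold gd; split <;> simp

lemma gd_smul (c : k) (f : Fin p → Fin p → k) (a b : ℕ) :
    gd p (c • f) a b = c * gd p f a b := by
  unfold gd; split <;> simp

/-- the linear map given by coefficients `c` -/
def Tmap (c : ℕ → ℕ → k) : (Fin p → Fin p → k) →ₗ[k] (Fin p → Fin p → k) where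
  toFun f := fun jn inn => ∑ i ∈ range p, c i (inn : ℕ) * gd p f ((inn : ℕ) + (jn : ℕ) - i) i
  map_add' f g := by
    funext jn inn
    simp [gd_add, mul_add, Finset.sum_add_distrib]
  map_smul' a f := by
    funext jn inn
    simp [gd_smul, Finset.mul_sum]
    ring_nf
    simp [mul_assoc, mul_comm, mul_left_comm]

lemma Tmap_apply (c : ℕ → ℕ → k) (f : Fin p → Fin p → k) (jn inn : Fin p) :
    Tmap c f jn inn = ∑ i ∈ range p, c i (inn : ℕ) * gd p f ((inn : ℕ) + (jn : ℕ) - i) i := rfl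

/-- signed coefficient -/
def cE (p : ℕ) (i n : ℕ) : k := (-1 : k) ^ (n - i) * (Nat.choose (p - 1 - i) (p - 1 - n) : k)

/-- unsigned coefficient -/
def cE' (p : ℕ) (i n : ℕ) : k := (Nat.choose (p - 1 - i) (p - 1 - n) : k)

lemma cE_vanish {i n : ℕ} (h1 : n < i) (h2 : i < p) : (cE p i n : k) = 0 := by
  have : p - 1 - i < p - 1 - n := by omega
  simp [cE, Nat.choose_eq_zero_of_lt this]

lemma cE'_vanish {i n : ℕ} (h1 : n < i) (h2 : i < p) : (cE' p i n : k) = 0 := by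
  have : p - 1 - i < p - 1 - n := by omega
  simp [cE', Nat.choose_eq_zero_of_lt this]

/-- `C(p-1, r) = (-1)^r` in characteristic `p`. -/
lemma choose_pred_cast (hp : p.Prime) [CharP k p] {r : ℕ} (hr : r < p) :
    ((Nat.choose (p - 1) r : ℕ) : k) = (-1 : k) ^ r := by
  induction r with
  | zero => simp
  | succ n ih =>
    have hn : n < p := by omega
    have hpascal : (p - 1).choose n + (p - 1).choose (n + 1) = p.choose (n + 1) := by
      have hps : p - 1 + 1 = p := Nat.succ_pred_eq_of_pos hp.pos
      rw [← hps, Nat.choose_succ_succ, hps]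
    have hdvd : p ∣ p.choose (n + 1) := hp.dvd_choose_self (Nat.succ_ne_zero n) hr
    have hzero : ((p.choose (n + 1) : ℕ) : k) = 0 := (CharP.cast_eq_zero_iff k p _).2 hdvd
    have := congrArg (fun m : ℕ => (m : k)) hpascal
    push_cast at this
    rw [hzero] at this
    rw [ih hn] at this
    have h2 : ((p - 1).choose (n + 1) : k) = -(-1 : k) ^ n := by linear_combination this
    rw [h2]; ring

lemma alt_sum (d : ℕ) :
    ∑ r ∈ range (d + 1), (-1 : k) ^ r * (Nat.choose d r : k) = if d = 0 then 1 else 0 := by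
  have h := Int.alternating_sum_range_choose (n := d)
  have h2 := congrArg (fun z : ℤ => (z : k)) h
  push_cast at h2
  convert h2 using 2

lemma alt_sum' (d : ℕ) :
    ∑ r ∈ range (d + 1), (-1 : k) ^ (d - r) * (Nat.choose d r : k) = if d = 0 then 1 else 0 := by
  rw [← alt_sum (k := k) d, ← Finset.sum_range_reflect]
  apply Finset.sum_congr rfl
  intro r hr
  rw [Finset.mem_range] at hr
  have h1 : d + 1 - 1 - r = d - r := by omega
  have h2 : d - (d - r) = r := by omega
  have h3 : d - r ≤ d := by omega
  rw [h1, h2, Nat.choose_symm (by omega : r ≤ d)]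

lemma choose_prod_eq {i n m : ℕ} (hi : i ≤ m) (hm : m ≤ n) (hn : n < p) :
    Nat.choose (p - 1 - i) (p - 1 - m) * Nat.choose (p - 1 - m) (p - 1 - n)
      = Nat.choose (p - 1 - i) (p - 1 - n) * Nat.choose (n - i) (n - m) := by
  have h1 : p - 1 - m ≤ p - 1 - i := by omega
  have h2 : p - 1 - n ≤ p - 1 - m := by omega
  rw [Nat.choose_mul h2]
  congr 1
  have h3 : p - 1 - i - (p - 1 - n) = n - i := by omega
  have h4 : p - 1 - m - (p - 1 - n) = n - m := by omega
  rw [h3, h4]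

/-- terms vanish outside `Icc i n` -/
lemma term_vanish {i n m : ℕ} (hi : i < p) (hn : n < p) (hm : m < p)
    (h : ¬ (i ≤ m ∧ m ≤ n)) :
    (Nat.choose (p - 1 - m) (p - 1 - n) * Nat.choose (p - 1 - i) (p - 1 - m) : ℕ) = 0 := by
  rcases not_and_or.1 h with h' | h'
  · have : p - 1 - i < p - 1 - m := by omega
    simp [Nat.choose_eq_zero_of_lt this]
  · have : p - 1 - m < p - 1 - n := by omega
    simp [Nat.choose_eq_zero_of_lt this]


lemma vand_aux {i n : ℕ} (hi : i < p) (hn : n < p) (ε : k) (hε : i = n → ε = 1) (sg : ℕ → k)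
    (hsg : ∀ m, i ≤ m → m ≤ n → sg m = ε * (-1 : k) ^ (m - i)) :
    ∑ m ∈ range p, sg m *
        ((Nat.choose (p - 1 - m) (p - 1 - n) * Nat.choose (p - 1 - i) (p - 1 - m) : ℕ) : k)
      = if i = n then 1 else 0 := by
  by_cases hin : i ≤ n
  · have hsub : Finset.Icc i n ⊆ range p := by
      intro m hm; rw [Finset.mem_Icc] at hm; rw [Finset.mem_range]; omega
    rw [← Finset.sum_subset hsub (by
      intro m hm hm'
      rw [Finset.mem_range] at hm
      rw [Finset.mem_Icc] at hm'
      rw [term_vanish hi hn hm (by omega)]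
      simp)]
    rw [← Finset.Ico_add_one_right_eq_Icc, Finset.sum_Ico_eq_sum_range]
    have hd : n + 1 - i = (n - i) + 1 := by omega
    rw [hd]
    set d := n - i with hdd
    have hcalc : ∀ r ∈ range (d + 1),
        sg (i + r) * ((Nat.choose (p - 1 - (i + r)) (p - 1 - n)
            * Nat.choose (p - 1 - i) (p - 1 - (i + r)) : ℕ) : k)
        = (ε * (Nat.choose (p - 1 - i) (p - 1 - n) : k)) * ((-1 : k) ^ r * (Nat.choose d r : k)) := by
      intro r hr
      rw [Finset.mem_range] at hr
      have hr' : r ≤ d := by omega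
      rw [hsg (i + r) (by omega) (by omega)]
      have hmul : Nat.choose (p - 1 - i) (p - 1 - (i + r)) * Nat.choose (p - 1 - (i + r)) (p - 1 - n)
          = Nat.choose (p - 1 - i) (p - 1 - n) * Nat.choose (n - i) (n - (i + r)) :=
        choose_prod_eq (by omega) (by omega) hn
      have hsym : Nat.choose (n - i) (n - (i + r)) = Nat.choose d r := by
        have : n - (i + r) = d - r := by omega
        rw [this, Nat.choose_symm hr']
      rw [hsym] at hmul
      have h2 : i + r - i = r := by omega
      rw [h2]
      have hmulk : ((Nat.choose (p - 1 - i) (p - 1 - (i + r)) : ℕ) : k)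
            * ((Nat.choose (p - 1 - (i + r)) (p - 1 - n) : ℕ) : k)
          = ((Nat.choose (p - 1 - i) (p - 1 - n) : ℕ) : k) * ((Nat.choose d r : ℕ) : k) := by
        exact_mod_cast congrArg (Nat.cast (R := k)) hmul
      push_cast
      linear_combination ε * (-1 : k) ^ r * hmulk
    rw [Finset.sum_congr rfl hcalc, ← Finset.mul_sum, alt_sum]
    by_cases hd0 : d = 0
    · have hin' : i = n := by omega
      have : p - 1 - n = p - 1 - i := by omega
      rw [if_pos hin', hd0, hε hin', this]
      simp
    · rw [if_neg hd0, if_neg (by omega)]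
      simp
  · rw [if_neg (by omega)]
    apply Finset.sum_eq_zero
    intro m hm
    rw [Finset.mem_range] at hm
    rw [term_vanish hi hn hm (by omega)]
    simp

lemma vand1 {i n : ℕ} (hi : i < p) (hn : n < p) :
    ∑ m ∈ range p, (cE' p m n : k) * cE p i m = if i = n then 1 else 0 := by
  rw [← vand_aux hi hn 1 (fun _ => rfl) (fun m => (-1 : k) ^ (m - i))
    (fun m _ _ => by rw [one_mul])]
  apply Finset.sum_congr rfl
  intro m hm
  simp only [cE, cE']
  push_cast
  ring

lemma vand2 {i n : ℕ} (hi : i < p) (hn : n < p) :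
    ∑ m ∈ range p, (cE p m n : k) * cE' p i m = if i = n then 1 else 0 := by
  rw [← vand_aux hi hn ((-1 : k) ^ (n - i)) (fun h => by rw [h]; simp)
    (fun m => (-1 : k) ^ (n - m))
    (fun m h1 h2 => by
      have : (n - m) + (m - i) = (n - i) + 2 * (m - i) - 2 * (m - i) := by omega
      have hsum : (-1 : k) ^ (n - i) * (-1 : k) ^ (m - i) = (-1 : k) ^ (n - m) := by
        rw [← pow_add]
        have hh : n - i + (m - i) = (n - m) + 2 * (m - i) := by omega
        rw [hh, pow_add]
        simp [pow_mul]
      rw [hsum])]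
  apply Finset.sum_congr rfl
  intro m hm
  simp only [cE, cE']
  push_cast
  ring

lemma Tmap_comp_apply (c c' : ℕ → ℕ → k)
    (hc : ∀ m n, n < m → m < p → n < p → c m n = 0)
    (hc' : ∀ i m, m < i → i < p → m < p → c' i m = 0)
    (f : Fin p → Fin p → k) (jn inn : Fin p) :
    Tmap c (Tmap c' f) jn inn
      = ∑ i ∈ range p, (∑ m ∈ range p, c m (inn : ℕ) * c' i m) * gd p f ((inn : ℕ) + (jn : ℕ) - i) i := by
  rw [Tmap_apply]
  have step : ∀ m ∈ range p,
      c m (inn : ℕ) * gd p (Tmap c' f) ((inn : ℕ) + (jn : ℕ) - m) m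
      = ∑ i ∈ range p, (c m (inn : ℕ) * c' i m) * gd p f ((inn : ℕ) + (jn : ℕ) - i) i := by
    intro m hm
    rw [Finset.mem_range] at hm
    by_cases hmn : (inn : ℕ) < m
    · rw [hc m (inn : ℕ) hmn hm inn.isLt]
      simp
    · push_neg at hmn
      set a := (inn : ℕ) + (jn : ℕ) - m with ha
      by_cases hap : a < p
      · rw [gd_lt _ hap hm, Tmap_apply]
        simp only [Finset.mul_sum]
        apply Finset.sum_congr rfl
        intro i hi
        have harg : m + a - i = (inn : ℕ) + (jn : ℕ) - i := by omega
        rw [harg]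
        ring
      · rw [gd_left_ge _ (by omega)]
        rw [mul_zero]
        symm
        apply Finset.sum_eq_zero
        intro i hi
        rw [Finset.mem_range] at hi
        by_cases him : i ≤ m
        · rw [gd_left_ge _ (by omega)]
          ring
        · rw [hc' i m (by omega) hi hm]
          ring
  rw [Finset.sum_congr rfl step, Finset.sum_comm]
  simp only [Finset.sum_mul]

lemma Tmap_inv1 : (Tmap (cE' p)).comp (Tmap (cE p)) = (LinearMap.id : (Fin p → Fin p → k) →ₗ[k] _) := by
  apply LinearMap.ext
  intro f
  funext jn inn
  simp only [LinearMap.comp_apply, LinearMap.id_apply]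
  rw [Tmap_comp_apply (cE' p) (cE p)
    (fun m n h1 h2 h3 => cE'_vanish h1 h2) (fun i m h1 h2 h3 => cE_vanish h1 h2)]
  have step : ∀ i ∈ range p,
      (∑ m ∈ range p, cE' p m (inn : ℕ) * cE p i m) * gd p f ((inn : ℕ) + (jn : ℕ) - i) i
      = if i = (inn : ℕ) then gd p f ((inn : ℕ) + (jn : ℕ) - i) i else 0 := by
    intro i hi
    rw [Finset.mem_range] at hi
    rw [vand1 hi inn.isLt]
    split <;> simp
  rw [Finset.sum_congr rfl step, Finset.sum_ite_eq' (range p) (inn : ℕ)]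
  rw [if_pos (Finset.mem_range.2 inn.isLt)]
  have harg : (inn : ℕ) + (jn : ℕ) - (inn : ℕ) = (jn : ℕ) := by omega
  rw [harg, gd_lt _ jn.isLt inn.isLt]

lemma Tmap_inv2 : (Tmap (cE p)).comp (Tmap (cE' p)) = (LinearMap.id : (Fin p → Fin p → k) →ₗ[k] _) := by
  apply LinearMap.ext
  intro f
  funext jn inn
  simp only [LinearMap.comp_apply, LinearMap.id_apply]
  rw [Tmap_comp_apply (cE p) (cE' p)
    (fun m n h1 h2 h3 => cE_vanish h1 h2) (fun i m h1 h2 h3 => cE'_vanish h1 h2)]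
  have step : ∀ i ∈ range p,
      (∑ m ∈ range p, cE p m (inn : ℕ) * cE' p i m) * gd p f ((inn : ℕ) + (jn : ℕ) - i) i
      = if i = (inn : ℕ) then gd p f ((inn : ℕ) + (jn : ℕ) - i) i else 0 := by
    intro i hi
    rw [Finset.mem_range] at hi
    rw [vand2 hi inn.isLt]
    split <;> simp
  rw [Finset.sum_congr rfl step, Finset.sum_ite_eq' (range p) (inn : ℕ)]
  rw [if_pos (Finset.mem_range.2 inn.isLt)]
  have harg : (inn : ℕ) + (jn : ℕ) - (inn : ℕ) = (jn : ℕ) := by omega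
  rw [harg, gd_lt _ jn.isLt inn.isLt]

lemma coefkey (hp : p.Prime) [CharP k p] {i inn jn : ℕ}
    (hi : i < p) (hin : inn < p) (hjn : jn < p) (hb : inn + jn + 1 - i < p) :
    ((if 1 ≤ i then (cE p (i - 1) inn : k) else 0) + cE p i inn)
      = if inn + 1 < p then (cE p i (inn + 1) : k) else 0 := by
  by_cases hi0 : i = 0
  · subst hi0
    have hin1 : inn + 1 < p := by omega
    rw [if_neg (by omega), if_pos hin1, zero_add]
    simp only [cE, Nat.sub_zero]
    rw [choose_pred_cast hp (by omega : p - 1 - inn < p),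
        choose_pred_cast hp (by omega : p - 1 - (inn + 1) < p)]
    rw [← pow_add, ← pow_add]
    congr 1
    omega
  · have hi1 : 1 ≤ i := by omega
    rw [if_pos hi1]
    by_cases hinn1 : inn + 1 < p
    · rw [if_pos hinn1]
      by_cases hile : i ≤ inn
      · simp only [cE]
        have e1 : inn - (i - 1) = (inn - i) + 1 := by omega
        have e2 : inn + 1 - i = (inn - i) + 1 := by omega
        have e3 : p - 1 - (i - 1) = (p - 1 - i) + 1 := by omega
        have e4 : p - 1 - inn = (p - 1 - (inn + 1)) + 1 := by omega
        rw [e1, e2, e3, e4, Nat.choose_succ_succ]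
        have e5 : p - 1 - (inn + 1) + 1 = p - 1 - inn := by omega
        rw [Nat.succ_eq_add_one, e5]
        push_cast
        ring
      · by_cases hieq : i = inn + 1
        · subst hieq
          have : inn + 1 - 1 = inn := by omega
          rw [this, cE_vanish (by omega) hi]
          simp [cE]
        · rw [cE_vanish (show inn < i - 1 by omega) (by omega),
              cE_vanish (show inn < i by omega) hi,
              cE_vanish (show inn + 1 < i by omega) hi]
          simp
    · rw [if_neg hinn1]
      have hinn' : inn = p - 1 := by omega
      subst hinn'
      simp only [cE, Nat.sub_self, Nat.choose_zero_right, Nat.cast_one, mul_one]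
      have e1 : p - 1 - (i - 1) = (p - 1 - i) + 1 := by omega
      rw [e1, pow_succ]
      ring

lemma gdN (f : Fin p → Fin p → k) (a b : ℕ) :
    gd p (fun j i => gd p f (j : ℕ) ((i : ℕ) + 1) + gd p f ((j : ℕ) + 1) (i : ℕ)) a b
      = gd p f a (b + 1) + gd p f (a + 1) b := by
  by_cases ha : a < p
  · by_cases hb : b < p
    · rw [gd_lt _ ha hb]
    · rw [gd_right_ge _ _ (by omega : p ≤ b), gd_right_ge f _ (by omega : p ≤ b + 1),
        gd_right_ge f _ (by omega : p ≤ b)]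
      simp
  · rw [gd_left_ge _ (by omega : p ≤ a), gd_left_ge f (by omega : p ≤ a),
      gd_left_ge f (by omega : p ≤ a + 1)]
    simp

lemma Ekey (hp : p.Prime) [CharP k p] (f : Fin p → Fin p → k) (jn inn : Fin p) :
    Tmap (cE p) (fun j i => gd p f (j : ℕ) ((i : ℕ) + 1) + gd p f ((j : ℕ) + 1) (i : ℕ)) jn inn
      = if h : (inn : ℕ) + 1 < p then Tmap (cE p) f jn ⟨(inn : ℕ) + 1, h⟩ else 0 := by
  have hnp : (inn : ℕ) < p := inn.isLt
  have hjp : (jn : ℕ) < p := jn.isLt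
  set n' := (inn : ℕ) with hn'
  set j' := (jn : ℕ) with hj'
  rw [Tmap_apply]
  simp only [gdN]
  simp only [mul_add, Finset.sum_add_distrib]
  -- step B : shift the first sum
  set D : ℕ → k := fun i =>
    (if 1 ≤ i then (cE p (i - 1) n' : k) else 0) * gd p f (n' + j' + 1 - i) i with hD
  have hD0 : D 0 = 0 := by simp [hD]
  have hDp : D p = 0 := by simp [hD, gd_right_ge]
  have hshift : ∀ i, D (i + 1) = cE p i n' * gd p f (n' + j' - i) (i + 1) := by
    intro i
    have e : n' + j' + 1 - (i + 1) = n' + j' - i := by omega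
    simp only [hD, if_pos (by omega : 1 ≤ i + 1), Nat.add_sub_cancel, e]
  have stepB : ∑ i ∈ range p, cE p i n' * gd p f (n' + j' - i) (i + 1) = ∑ i ∈ range p, D i := by
    rw [Finset.sum_congr rfl (fun i _ => (hshift i).symm)]
    have h1 := Finset.sum_range_succ' D p
    have h2 := Finset.sum_range_succ D p
    rw [hD0, add_zero] at h1
    rw [hDp, add_zero] at h2
    rw [← h1, h2]
  rw [stepB]
  -- step C : fix up the second sum
  have stepC : ∑ i ∈ range p, cE p i n' * gd p f (n' + j' - i + 1) i
      = ∑ i ∈ range p, cE p i n' * gd p f (n' + j' + 1 - i) i := by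
    apply Finset.sum_congr rfl
    intro i hi
    rw [Finset.mem_range] at hi
    by_cases hle : i ≤ n' + j'
    · have e : n' + j' - i + 1 = n' + j' + 1 - i := by omega
      rw [e]
    · rw [cE_vanish (by omega) hi]
      simp
  rw [stepC]
  -- step D : rewrite the RHS as a sum
  have stepD : (if h : n' + 1 < p then Tmap (cE p) f jn ⟨n' + 1, h⟩ else 0)
      = ∑ i ∈ range p, (if n' + 1 < p then (cE p i (n' + 1) : k) else 0)
          * gd p f (n' + j' + 1 - i) i := by
    by_cases hn1 : n' + 1 < p
    · rw [dif_pos hn1, Tmap_apply]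
      apply Finset.sum_congr rfl
      intro i hi
      have hc : ((⟨n' + 1, hn1⟩ : Fin p) : ℕ) = n' + 1 := rfl
      rw [hc, if_pos hn1]
      have e : n' + 1 + j' - i = n' + j' + 1 - i := by omega
      rw [e]
    · rw [dif_neg hn1]
      symm
      apply Finset.sum_eq_zero
      intro i hi
      rw [if_neg hn1, zero_mul]
  rw [stepD, ← Finset.sum_add_distrib]
  apply Finset.sum_congr rfl
  intro i hi
  rw [Finset.mem_range] at hi
  rw [← add_mul]
  by_cases hG : n' + j' + 1 - i < p
  · rw [coefkey hp hi hnp hjp hG]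
  · rw [gd_left_ge f (by omega : p ≤ n' + j' + 1 - i)]
    simp

/-- the forward map `V ⊗ V → (Fin p → Fin p → k)`, `v ⊗ w ↦ fun j i => v i * w j`. -/
noncomputable def toFun0 : ((Fin p → k) ⊗[k] (Fin p → k)) →ₗ[k] (Fin p → Fin p → k) :=
  TensorProduct.lift
    (LinearMap.mk₂ k (fun v w => fun j i => v i * w j)
      (fun v v' w => by funext j i; simp [add_mul])
      (fun c v w => by funext j i; simp [mul_assoc])
      (fun v w w' => by funext j i; simp [mul_add])
      (fun c v w => by funext j i; simp; ring))

lemma toFun0_tmul (v w : Fin p → k) :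
    toFun0 (v ⊗ₜ[k] w) = fun j i => v i * w j := rfl

/-- the inverse map. -/
noncomputable def invFun0 : (Fin p → Fin p → k) →ₗ[k] ((Fin p → k) ⊗[k] (Fin p → k)) where
  toFun f := ∑ j : Fin p, f j ⊗ₜ[k] Pi.single j (1 : k)
  map_add' f g := by
    simp only [Pi.add_apply, add_tmul, Finset.sum_add_distrib]
  map_smul' c f := by
    simp only [Pi.smul_apply, RingHom.id_apply, Finset.smul_sum, smul_tmul']

/-- the basic equivalence. -/
noncomputable def e0 : ((Fin p → k) ⊗[k] (Fin p → k)) ≃ₗ[k] (Fin p → Fin p → k) :=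
  LinearEquiv.ofLinear toFun0 invFun0
    (by
      apply LinearMap.ext
      intro f
      funext jn i
      simp only [LinearMap.comp_apply, LinearMap.id_apply, invFun0, LinearMap.coe_mk,
        AddHom.coe_mk, map_sum]
      rw [Finset.sum_apply, Finset.sum_apply]
      rw [Finset.sum_eq_single jn]
      · simp [toFun0_tmul]
      · intro b _ hb
        simp [toFun0_tmul, Pi.single_apply, hb.symm]
      · intro h
        exact absurd (Finset.mem_univ jn) h)
    (by
      apply TensorProduct.ext'
      intro v w
      simp only [LinearMap.comp_apply, LinearMap.id_apply, toFun0_tmul, invFun0,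
        LinearMap.coe_mk, AddHom.coe_mk]
      have hline : ∀ j : Fin p, (fun i => v i * w j) ⊗ₜ[k] Pi.single j (1 : k)
          = v ⊗ₜ[k] (Pi.single j (w j) : Fin p → k) := by
        intro j
        have h1 : (fun i => v i * w j) = w j • v := by
          funext i; simp [mul_comm]
        rw [h1, smul_tmul]
        congr 1
        funext m
        simp [Pi.single_apply]
      rw [Finset.sum_congr rfl (fun j _ => hline j), ← tmul_sum]
      congr 1
      exact Finset.univ_sum_single w)

lemma S1_apply (v : Fin p → k) (i : Fin p) :
    (shiftMat k p).mulVecLin v i = if h : (i : ℕ) + 1 < p then v ⟨(i : ℕ) + 1, h⟩ else 0 := by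
  simp only [Matrix.mulVecLin_apply, Matrix.mulVec, dotProduct, shiftMat, Matrix.of_apply,
    boole_mul]
  by_cases h : (i : ℕ) + 1 < p
  · rw [dif_pos h, Finset.sum_eq_single (⟨(i : ℕ) + 1, h⟩ : Fin p)]
    · simp
    · intro b _ hb
      rw [if_neg]
      intro hc
      exact hb (Fin.ext hc.symm)
    · intro hmem
      exact absurd (Finset.mem_univ _) hmem
  · rw [dif_neg h]
    apply Finset.sum_eq_zero
    intro b _
    rw [if_neg]
    intro hc
    omega

theorem aux (k : Type*) [Field k] (p : ℕ) (hp : p.Prime) [CharP k p] :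
    ∃ e : ((Fin p → k) ⊗[k] (Fin p → k)) ≃ₗ[k] (Fin p → Fin p → k),
      (∀ w : (Fin p → k) ⊗[k] (Fin p → k),
        e ((LinearMap.rTensor (Fin p → k) (shiftMat k p).mulVecLin
            + LinearMap.lTensor (Fin p → k) (shiftMat k p).mulVecLin) w)
          = fun i => (shiftMat k p).mulVecLin (e w i)) ∧
      (∀ w : (Fin p → k) ⊗[k] (Fin p → k),
        e ((LinearMap.rTensor (Fin p → k) (0 : (Fin p → k) →ₗ[k] (Fin p → k))
            + LinearMap.lTensor (Fin p → k) (0 : (Fin p → k) →ₗ[k] (Fin p → k))) w)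
          = fun i => (0 : (Fin p → k) →ₗ[k] (Fin p → k)) (e w i)) := by
  set S1 : (Fin p → k) →ₗ[k] (Fin p → k) := (shiftMat k p).mulVecLin with hS1
  set N : ((Fin p → k) ⊗[k] (Fin p → k)) →ₗ[k] ((Fin p → k) ⊗[k] (Fin p → k)) :=
    LinearMap.rTensor (Fin p → k) S1 + LinearMap.lTensor (Fin p → k) S1 with hN
  set Eq2 : (Fin p → Fin p → k) ≃ₗ[k] (Fin p → Fin p → k) :=
    LinearEquiv.ofLinear (Tmap (cE p)) (Tmap (cE' p)) Tmap_inv2 Tmap_inv1 with hEq2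
  refine ⟨e0.trans Eq2, ?_, ?_⟩
  · -- the S1 intertwining
    set e : ((Fin p → k) ⊗[k] (Fin p → k)) ≃ₗ[k] (Fin p → Fin p → k) := e0.trans Eq2 with he
    suffices h : (LinearMap.compLeft S1 (Fin p)).comp (e.toLinearMap) = e.toLinearMap.comp N by
      intro w
      have h2 := LinearMap.congr_fun h w
      simp only [LinearMap.comp_apply, LinearMap.compLeft_apply, LinearEquiv.coe_coe] at h2
      rw [← h2]
      rfl
    apply TensorProduct.ext'
    intro v w
    simp only [LinearMap.comp_apply, LinearMap.compLeft_apply, LinearEquiv.coe_coe, hN,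
      LinearMap.add_apply, LinearMap.rTensor_tmul, LinearMap.lTensor_tmul, map_add]
    have heval : ∀ x y : Fin p → k, e (x ⊗ₜ[k] y) = Tmap (cE p) (fun j i => x i * y j) := by
      intro x y
      rfl
    rw [heval, heval, heval]
    set f0 : Fin p → Fin p → k := fun j i => v i * w j with hf0
    have hg : (fun j i => (S1 v) i * w j) + (fun j i => v i * (S1 w) j)
        = fun (j i : Fin p) => gd p f0 (j : ℕ) ((i : ℕ) + 1) + gd p f0 ((j : ℕ) + 1) (i : ℕ) := by
      funext j i
      simp only [Pi.add_apply]
      congr 1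
      · rw [hS1, S1_apply]
        by_cases h1 : (i : ℕ) + 1 < p
        · rw [dif_pos h1, gd_lt f0 j.isLt h1]
        · rw [dif_neg h1, gd_right_ge f0 _ (by omega)]
          simp
      · rw [hS1, S1_apply]
        by_cases h1 : (j : ℕ) + 1 < p
        · rw [dif_pos h1, gd_lt f0 h1 i.isLt]
        · rw [dif_neg h1, gd_left_ge f0 (by omega)]
          simp
    have hadd : Tmap (cE p) (fun j i => (S1 v) i * w j) + Tmap (cE p) (fun j i => v i * (S1 w) j)
        = Tmap (cE p) ((fun j i => (S1 v) i * w j) + (fun j i => v i * (S1 w) j)) :=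
      (map_add _ _ _).symm
    rw [hadd, hg]
    funext jn inn
    rw [Ekey hp f0 jn inn]
    simp only [LinearMap.compLeft_apply, Function.comp_apply]
    rw [hS1, S1_apply]
  · -- the S2 part
    intro w
    rw [LinearMap.rTensor_zero, LinearMap.lTensor_zero, add_zero, LinearMap.zero_apply,
      LinearEquiv.map_zero]
    rfl

end IndTensorSq

/-- over `A = k[x,y]/(x^p, y^p)` with `x,y` primitive (group algebra of
`G_{a(1)}²`), the `p`-dimensional module `V(𝔭)` induced from the trivial module along
`t ↦ a x + b y` — on which `s₂` acts by `0` and a complementary `s₁` acts by the Jordan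
block `J_p` — satisfies `V(𝔭) ⊗̃ V(𝔭) ≅ p · V(𝔭)` for the Leibniz tensor product. -/
theorem induced_module_tensor_square
    (k : Type*) [Field k] (p : ℕ) (hp : p.Prime) [CharP k p] :
    let V := Fin p → k
    let S1 : V →ₗ[k] V := (shiftMat k p).mulVecLin   -- action of s₁
    let S2 : V →ₗ[k] V := 0                          -- action of s₂
    ∃ e : (V ⊗[k] V) ≃ₗ[k] (Fin p → V),
      (∀ w : V ⊗[k] V,
        e ((LinearMap.rTensor V S1 + LinearMap.lTensor V S1) w) = fun i => S1 (e w i)) ∧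
      (∀ w : V ⊗[k] V,
        e ((LinearMap.rTensor V S2 + LinearMap.lTensor V S2) w) = fun i => S2 (e w i)) := by
  intro V S1 S2
  exact IndTensorSq.aux k p hp
end

section
/- Let k be a field of characteristic p > 0, A = k[x,y]/(x^p,y^p), and for a ∈ k let s₁ = x, s₂ = a x + y. Let V be the p-dimensional A-module annihilated by s₂ on which s₁ acts by the nilpotent Jordan block J_p, with basis s₁^{p-1}v, ..., s₁v, v. Write ω(s₁) = ((s₁⊗1 + 1⊗s₁)^p − (s₁^p⊗1 + 1⊗s₁^p))/p, the formal Witt cocycle, an integer combination of s₁^n ⊗ s₁^m with n+m = p, n,m ≥ 1. Then ω(s₁) does not annihilate V ⊗_k V; in particular ω(s₁)·(s₁^{p-2}v ⊗ v) = s₁^{p-1}v ⊗ s₁^{p-1}v ≠ 0. -/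
open TensorProduct

lemma shift_single (k : Type*) [Field k] {p : ℕ} (a : Fin p) :
    (shiftMat k p).mulVecLin (Pi.single a 1) =
      fun i : Fin p => if (i : ℕ) + 1 = (a : ℕ) then 1 else 0 := by
  funext i
  simp [shiftMat, Matrix.mulVecLin_apply, Matrix.mulVec, dotProduct, Pi.single_apply,
    ite_and, eq_comm]

lemma shift_single_zero (k : Type*) [Field k] {p : ℕ} (h : 0 < p) :
    (shiftMat k p).mulVecLin (Pi.single (⟨0, h⟩ : Fin p) 1) = 0 := by
  rw [shift_single]; funext i; simp

lemma shift_single_succ (k : Type*) [Field k] {p : ℕ} (j : ℕ) (h : j + 1 < p) :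
    (shiftMat k p).mulVecLin (Pi.single (⟨j + 1, h⟩ : Fin p) 1) =
      Pi.single (⟨j, Nat.lt_of_succ_lt h⟩ : Fin p) 1 := by
  rw [shift_single]; funext i
  simp [Pi.single_apply, Fin.ext_iff, eq_comm]

lemma shift_pow_single (k : Type*) [Field k] {p : ℕ} (m : ℕ) :
    ∀ (j : ℕ) (h : j + m < p),
      ((shiftMat k p).mulVecLin ^ m) (Pi.single (⟨j + m, h⟩ : Fin p) 1) =
        Pi.single (⟨j, lt_of_le_of_lt (Nat.le_add_right _ _) h⟩ : Fin p) 1 := by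
  induction m with
  | zero => intro j h; simp
  | succ m ih =>
    intro j h
    rw [pow_succ, Module.End.mul_apply]
    have : (⟨j + (m + 1), h⟩ : Fin p) = ⟨(j + m) + 1, by omega⟩ := by simp [Fin.ext_iff]; omega
    rw [this, shift_single_succ]
    exact ih j (by omega)

lemma tmul_single_ne_zero (k : Type*) [Field k] {p : ℕ} (a b : Fin p) :
    (Pi.single a 1 ⊗ₜ[k] Pi.single b 1 : (Fin p → k) ⊗[k] (Fin p → k)) ≠ 0 := by
  intro h
  have h2 := congrArg (TensorProduct.map
    (LinearMap.proj a : (Fin p → k) →ₗ[k] k) (LinearMap.proj b : (Fin p → k) →ₗ[k] k)) h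
  rw [TensorProduct.map_tmul, map_zero] at h2
  simp at h2


/-- let `V` be the `p`-dimensional module with `s₂ = a x + b y` acting by `0`
and `s₁` acting by the Jordan block `J_p` with basis `s₁^{p-1} v, …, s₁ v, v`
(here `v = e_{p-1}` and `s₁^i v = e_{p-1-i}`).  The formal Witt cocycle
`ω(s₁) = Σ_{0<i<p} (C(p,i)/p) · s₁^i ⊗ s₁^{p-i}` does not annihilate `V ⊗ V`; in
particular `ω(s₁)·(s₁^{p-2} v ⊗ v) = s₁^{p-1} v ⊗ s₁^{p-1} v ≠ 0`. -/
theorem witt_cocycle_not_annihilating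
    (k : Type*) [Field k] (p : ℕ) (hp : p.Prime) [CharP k p] :
    let V := Fin p → k
    let S : V →ₗ[k] V := (shiftMat k p).mulVecLin
    let W : (V ⊗[k] V) →ₗ[k] (V ⊗[k] V) :=
      ∑ i ∈ Finset.Ioo 0 p, (p.choose i / p) • TensorProduct.map (S ^ i) (S ^ (p - i))
    let v : V := Pi.single ⟨p - 1, Nat.sub_lt hp.pos one_pos⟩ 1
    let e1 : V := Pi.single ⟨1, hp.one_lt⟩ 1     -- s₁^{p-2} v
    let e0 : V := Pi.single ⟨0, hp.pos⟩ 1        -- s₁^{p-1} v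
    W (e1 ⊗ₜ[k] v) = e0 ⊗ₜ[k] e0 ∧ (e0 ⊗ₜ[k] e0 : V ⊗[k] V) ≠ 0 := by
  intro V S W v e1 e0
  refine ⟨?_, tmul_single_ne_zero k _ _⟩
  have hS1 : S e1 = e0 := by
    exact shift_single_succ k 0 hp.one_lt
  have hS0 : S e0 = 0 := shift_single_zero k hp.pos
  have key : ∀ i ∈ Finset.Ioo 0 p, i ≠ 1 →
      ((p.choose i / p) • TensorProduct.map (S ^ i) (S ^ (p - i))) (e1 ⊗ₜ[k] v) = 0 := by
    intro i hi hne
    have h2 : 2 ≤ i := by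
      simp only [Finset.mem_Ioo] at hi; omega
    obtain ⟨m, rfl⟩ : ∃ m, i = m + 2 := ⟨i - 2, by omega⟩
    have : (S ^ (m + 2)) e1 = 0 := by
      rw [pow_succ, pow_succ, Module.End.mul_apply, Module.End.mul_apply, hS1, hS0]
      simp
    simp [TensorProduct.map_tmul, this]
  rw [LinearMap.sum_apply, Finset.sum_eq_single 1 key
    (fun h => absurd (Finset.mem_Ioo.mpr ⟨one_pos, hp.one_lt⟩) h)]
  have hc : p.choose 1 / p = 1 := by
    rw [Nat.choose_one_right, Nat.div_self hp.pos]
  have hSv : (S ^ (p - 1)) v = e0 := by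
    have h0 := hp.pos
    have := shift_pow_single k (p := p) (p - 1) 0 (by omega)
    simpa using this
  simp [hc, TensorProduct.map_tmul, pow_one, hS1, hSv, Nat.div_self hp.pos]
end

section
/- Let k be a field of characteristic p > 2 and let g be the Heisenberg Lie algebra of dimension 3 with basis x, y, z, [x,y] = z central, and trivial p-operation, with restricted enveloping algebra A = k⟨x,y,z⟩/([x,y]−z, [z,x], [z,y], x^p, y^p, z^p). Let V = A ⊗_{u(⟨x⟩)} k be the module induced from the trivial ⟨x⟩-module, with PBW basis {y^i z^j ⊗ 1 : 0 ≤ i,j ≤ p−1}. Then the restriction of V to k[x]/(x^p) decomposes as V|_{⟨x⟩} ≅ 2J_1 ⊕ 2J_2 ⊕ ... ⊕ 2J_{p−1} ⊕ J_p, where J_i is the i-dimensional indecomposable k[x]/(x^p)-module. -/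
/-- The action of `x` on the induced module `V = A ⊗_{u(⟨x⟩)} k` for the 3-dimensional
Heisenberg Lie algebra, on the PBW basis `{yⁱ zʲ ⊗ 1 : 0 ≤ i,j ≤ p−1}`:
`x · yⁱ zʲ ⊗ 1 = i · y^{i−1} z^{j+1} ⊗ 1`. -/
def heisXop (k : Type*) [Field k] (p : ℕ) :
    (Fin p × Fin p → k) →ₗ[k] (Fin p × Fin p → k) :=
  (Matrix.of fun r c : Fin p × Fin p =>
    if (r.1 : ℕ) + 1 = (c.1 : ℕ) ∧ (r.2 : ℕ) = (c.2 : ℕ) + 1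
    then ((c.1 : ℕ) : k) else 0).mulVecLin

namespace HeisAux

variable (k : Type*) [Field k] (p : ℕ)

noncomputable def al (i j : ℕ) : k :=
  ∏ x ∈ Finset.Ico (i + j + 1 - p) i, ((x + 1 : ℕ) : k)

lemma al_ne_zero [CharP k p] {i : ℕ} (hi : i < p) (j : ℕ) : al k p i j ≠ 0 := by
  refine Finset.prod_ne_zero_iff.2 fun x hx => ?_
  simp only [Finset.mem_Ico] at hx
  rw [Ne, CharP.cast_eq_zero_iff k p]
  intro hdvd
  have := Nat.le_of_dvd (by omega) hdvd
  omega

lemma al_succ (i j : ℕ) (hj : 1 ≤ j) (hjp : j ≤ p - 1) :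
    al k p (i + 1) (j - 1) = al k p i j * ((i + 1 : ℕ) : k) := by
  have h1 : (i + 1) + (j - 1) + 1 - p = i + j + 1 - p := by omega
  have h2 : i + j + 1 - p ≤ i := by omega
  rw [al, al, h1, Finset.prod_Ico_succ_top h2]

def pos (r : Fin (p - 1)) (c : Fin 2) (l : Fin ((r : ℕ) + 1)) : Fin p × Fin p :=
  if c = 0 then
    (⟨l, by have := l.isLt; have := r.isLt; omega⟩,
     ⟨(r : ℕ) - l, by have := r.isLt; omega⟩)
  else
    (⟨p - 1 - r + l, by have := l.isLt; have := r.isLt; omega⟩,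
     ⟨p - 1 - l, by have := l.isLt; have := r.isLt; omega⟩)

def pos2 (l : Fin p) : Fin p × Fin p :=
  (l, ⟨p - 1 - l, by have := l.isLt; omega⟩)

lemma pos_zero_fst (r : Fin (p - 1)) (l : Fin ((r : ℕ) + 1)) :
    ((pos p r 0 l).1 : ℕ) = (l : ℕ) := by simp [pos]

lemma pos_zero_snd (r : Fin (p - 1)) (l : Fin ((r : ℕ) + 1)) :
    ((pos p r 0 l).2 : ℕ) = (r : ℕ) - (l : ℕ) := by simp [pos]

lemma pos_one_fst (r : Fin (p - 1)) (l : Fin ((r : ℕ) + 1)) :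
    ((pos p r 1 l).1 : ℕ) = p - 1 - (r : ℕ) + (l : ℕ) := by simp [pos]

lemma pos_one_snd (r : Fin (p - 1)) (l : Fin ((r : ℕ) + 1)) :
    ((pos p r 1 l).2 : ℕ) = p - 1 - (l : ℕ) := by simp [pos]

lemma pos2_fst (l : Fin p) : ((pos2 p l).1 : ℕ) = (l : ℕ) := rfl

lemma pos2_snd (l : Fin p) : ((pos2 p l).2 : ℕ) = p - 1 - (l : ℕ) := rfl

abbrev T := (Π r : Fin (p - 1), Fin 2 → (Fin ((r : ℕ) + 1) → k)) × (Fin p → k)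

noncomputable def Fmap : (Fin p × Fin p → k) →ₗ[k] T k p where
  toFun v :=
    (fun r c l => al k p ((pos p r c l).1 : ℕ) ((pos p r c l).2 : ℕ) * v (pos p r c l),
     fun l => al k p ((pos2 p l).1 : ℕ) ((pos2 p l).2 : ℕ) * v (pos2 p l))
  map_add' v w := by
    refine Prod.ext ?_ ?_ <;> funext <;> simp [Pi.add_apply] <;> ring
  map_smul' a v := by
    refine Prod.ext ?_ ?_ <;> funext <;> simp [Pi.smul_apply, smul_eq_mul] <;> ring

noncomputable def Gmap : T k p →ₗ[k] (Fin p × Fin p → k) where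
  toFun w := fun ij =>
    (al k p (ij.1 : ℕ) (ij.2 : ℕ))⁻¹ *
      (if h : (ij.1 : ℕ) + (ij.2 : ℕ) < p - 1 then
         w.1 ⟨(ij.1 : ℕ) + (ij.2 : ℕ), h⟩ 0 ⟨(ij.1 : ℕ), by simp only [Fin.val_mk]; omega⟩
       else if h2 : (ij.1 : ℕ) + (ij.2 : ℕ) = p - 1 then w.2 ij.1
       else
         w.1 ⟨2 * p - 2 - ((ij.1 : ℕ) + (ij.2 : ℕ)),
              by have := ij.1.isLt; have := ij.2.isLt; omega⟩ 1
           ⟨p - 1 - (ij.2 : ℕ),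
              by simp only [Fin.val_mk]; have := ij.1.isLt; have := ij.2.isLt; omega⟩)
  map_add' v w := by
    funext ij
    simp only [Prod.fst_add, Prod.snd_add, Pi.add_apply]
    split_ifs <;> ring
  map_smul' a v := by
    funext ij
    simp only [Prod.smul_fst, Prod.smul_snd, Pi.smul_apply, smul_eq_mul, RingHom.id_apply]
    split_ifs <;> ring

set_option linter.unusedSectionVars false in
lemma pi_congr {n : ℕ} (f : Π r : Fin n, Fin 2 → (Fin ((r : ℕ) + 1) → k))
    {r r' : Fin n} (h : (r : ℕ) = (r' : ℕ)) (c : Fin 2)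
    {l : Fin ((r : ℕ) + 1)} {l' : Fin ((r' : ℕ) + 1)} (hl : (l : ℕ) = (l' : ℕ)) :
    f r c l = f r' c l' := by
  have hr : r = r' := Fin.ext h
  subst hr
  congr 1
  exact Fin.ext hl

lemma GF [CharP k p] : (Gmap k p).comp (Fmap k p) = LinearMap.id := by
  apply LinearMap.ext
  intro v
  funext ij
  have hi := ij.1.isLt
  have hj := ij.2.isLt
  simp only [LinearMap.coe_comp, Function.comp_apply, LinearMap.id_apply,
    Gmap, Fmap, LinearMap.coe_mk, AddHom.coe_mk]
  rcases lt_trichotomy ((ij.1 : ℕ) + (ij.2 : ℕ)) (p - 1) with h | h | h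
  · rw [dif_pos h]
    have hpos : pos p ⟨(ij.1 : ℕ) + (ij.2 : ℕ), h⟩ 0
        ⟨(ij.1 : ℕ), by simp only [Fin.val_mk]; omega⟩ = ij := by
      refine Prod.ext (Fin.ext ?_) (Fin.ext ?_)
      · rw [pos_zero_fst]
      · rw [pos_zero_snd]; simp only [Fin.val_mk]; omega
    rw [hpos, ← mul_assoc, inv_mul_cancel₀ (al_ne_zero k p ij.1.isLt _), one_mul]
  · rw [dif_neg (by omega), dif_pos h]
    have hpos : pos2 p ij.1 = ij := by
      refine Prod.ext rfl (Fin.ext ?_)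
      rw [pos2_snd]; omega
    rw [hpos, ← mul_assoc, inv_mul_cancel₀ (al_ne_zero k p ij.1.isLt _), one_mul]
  · rw [dif_neg (by omega), dif_neg (by omega)]
    have hpos : pos p ⟨2 * p - 2 - ((ij.1 : ℕ) + (ij.2 : ℕ)), by omega⟩ 1
        ⟨p - 1 - (ij.2 : ℕ), by simp only [Fin.val_mk]; omega⟩ = ij := by
      refine Prod.ext (Fin.ext ?_) (Fin.ext ?_)
      · rw [pos_one_fst]; simp only [Fin.val_mk]; omega
      · rw [pos_one_snd]; simp only [Fin.val_mk]; omega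
    rw [hpos, ← mul_assoc, inv_mul_cancel₀ (al_ne_zero k p ij.1.isLt _), one_mul]

lemma FG [CharP k p] : (Fmap k p).comp (Gmap k p) = LinearMap.id := by
  apply LinearMap.ext
  intro w
  refine Prod.ext ?_ ?_
  · funext r c l
    have hr := r.isLt; have hl := l.isLt
    simp only [LinearMap.coe_comp, Function.comp_apply, LinearMap.id_apply,
      Gmap, Fmap, LinearMap.coe_mk, AddHom.coe_mk]
    by_cases hc : c = 0
    · subst hc
      rw [← mul_assoc, mul_inv_cancel₀ (al_ne_zero k p (pos p r 0 l).1.isLt _), one_mul]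
      rw [dif_pos (by rw [pos_zero_fst, pos_zero_snd]; omega)]
      refine pi_congr k w.1 ?_ 0 ?_
      · simp only [Fin.val_mk]; rw [pos_zero_fst, pos_zero_snd]; omega
      · simp only [Fin.val_mk]; rw [pos_zero_fst]
    · have hc1 : c = 1 := Fin.eq_one_of_ne_zero c hc
      subst hc1
      rw [← mul_assoc, mul_inv_cancel₀ (al_ne_zero k p (pos p r 1 l).1.isLt _), one_mul]
      rw [dif_neg (by rw [pos_one_fst, pos_one_snd]; omega),
        dif_neg (by rw [pos_one_fst, pos_one_snd]; omega)]
      refine pi_congr k w.1 ?_ 1 ?_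
      · simp only [Fin.val_mk]; rw [pos_one_fst, pos_one_snd]; omega
      · simp only [Fin.val_mk]; rw [pos_one_snd]; omega
  · funext l
    have hl := l.isLt
    simp only [LinearMap.coe_comp, Function.comp_apply, LinearMap.id_apply,
      Gmap, Fmap, LinearMap.coe_mk, AddHom.coe_mk]
    rw [← mul_assoc, mul_inv_cancel₀ (al_ne_zero k p (pos2 p l).1.isLt _), one_mul]
    rw [dif_neg (by rw [pos2_fst, pos2_snd]; omega), dif_pos (by rw [pos2_fst, pos2_snd]; omega)]
    rfl

lemma shift_apply {n : ℕ} (w : Fin n → k) (l : Fin n) :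
    (shiftMat k n).mulVecLin w l =
      if h : (l : ℕ) + 1 < n then w ⟨(l : ℕ) + 1, h⟩ else 0 := by
  simp only [Matrix.mulVecLin_apply, Matrix.mulVec, dotProduct, shiftMat, Matrix.of_apply]
  split_ifs with h
  · rw [Finset.sum_eq_single (⟨(l : ℕ) + 1, h⟩ : Fin n)]
    · simp
    · intro b _ hb
      rw [if_neg, zero_mul]
      intro hc
      exact hb (Fin.ext hc.symm)
    · simp
  · apply Finset.sum_eq_zero
    intro b _
    rw [if_neg, zero_mul]
    intro hc
    have := b.isLt
    omega

lemma heisXop_apply (v : Fin p × Fin p → k) (ab : Fin p × Fin p) :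
    heisXop k p v ab =
      if h : (ab.1 : ℕ) + 1 < p ∧ 1 ≤ (ab.2 : ℕ)
      then (((ab.1 : ℕ) + 1 : ℕ) : k) * v (⟨(ab.1 : ℕ) + 1, h.1⟩, ⟨(ab.2 : ℕ) - 1, by have := ab.2.isLt; omega⟩)
      else 0 := by
  obtain ⟨a, b⟩ := ab
  simp only [heisXop, Matrix.mulVecLin_apply, Matrix.mulVec, dotProduct, Matrix.of_apply]
  split_ifs with h
  · rw [Finset.sum_eq_single ((⟨(a : ℕ) + 1, h.1⟩, ⟨(b : ℕ) - 1, by have := b.isLt; omega⟩) :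
        Fin p × Fin p)]
    · rw [if_pos (⟨by simp, by simp; omega⟩ : _ ∧ _)]
    · intro c _ hc
      rw [if_neg, zero_mul]
      rintro ⟨h1, h2⟩
      exact hc (Prod.ext (Fin.ext (by simp; omega)) (Fin.ext (by simp; omega)))
    · simp
  · apply Finset.sum_eq_zero
    intro c _
    rw [if_neg, zero_mul]
    rintro ⟨h1, h2⟩
    have := c.1.isLt
    omega

lemma step (v : Fin p × Fin p → k) (x y : Fin p × Fin p)
    (h1 : (x.1 : ℕ) + 1 = (y.1 : ℕ)) (h2 : (x.2 : ℕ) = (y.2 : ℕ) + 1) :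
    al k p (x.1 : ℕ) (x.2 : ℕ) * heisXop k p v x
      = al k p (y.1 : ℕ) (y.2 : ℕ) * v y := by
  have hy1 := y.1.isLt
  have hx2 := x.2.isLt
  have e1 : (y.1 : ℕ) = (x.1 : ℕ) + 1 := h1.symm
  have e2 : (y.2 : ℕ) = (x.2 : ℕ) - 1 := by omega
  rw [heisXop_apply, dif_pos ⟨by omega, by omega⟩, ← mul_assoc]
  conv_rhs => rw [e1, e2, al_succ k p (x.1 : ℕ) (x.2 : ℕ) (by omega) (by omega)]
  congr 1
  exact congrArg v (Prod.ext (Fin.ext (by simp only [Fin.val_mk]; omega))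
    (Fin.ext (by simp only [Fin.val_mk]; omega)))

lemma step0 (v : Fin p × Fin p → k) (x : Fin p × Fin p)
    (h : ¬((x.1 : ℕ) + 1 < p ∧ 1 ≤ (x.2 : ℕ))) :
    al k p (x.1 : ℕ) (x.2 : ℕ) * heisXop k p v x = 0 := by
  rw [heisXop_apply, dif_neg h, mul_zero]

end HeisAux

/-- for the 3-dimensional Heisenberg Lie algebra in characteristic `p > 2`,
the induced module `V = A ⊗_{u(⟨x⟩)} k` restricted to `k[x]/(x^p)` decomposes as
`2J₁ ⊕ 2J₂ ⊕ ⋯ ⊕ 2J_{p−1} ⊕ J_p`: there is a `k`-linear equivalence onto two blocks of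
each dimension `1, …, p−1` together with one block of dimension `p`, intertwining the
`x`-action with the Jordan-block shifts. -/
theorem heisenberg_induced_restriction
    (k : Type*) [Field k] (p : ℕ) (hp : p.Prime) (hp2 : 2 < p) [CharP k p] :
    ∃ e : (Fin p × Fin p → k) ≃ₗ[k]
        ((Π r : Fin (p - 1), Fin 2 → (Fin ((r : ℕ) + 1) → k)) × (Fin p → k)),
      ∀ v : Fin p × Fin p → k,
        e (heisXop k p v) =
          (fun (r : Fin (p - 1)) c => (shiftMat k ((r : ℕ) + 1)).mulVecLin ((e v).1 r c),
           (shiftMat k p).mulVecLin (e v).2) := by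
  refine ⟨LinearEquiv.ofLinear (HeisAux.Fmap k p) (HeisAux.Gmap k p) (HeisAux.FG k p) (HeisAux.GF k p), ?_⟩
  intro v
  simp only [LinearEquiv.ofLinear_apply]
  refine Prod.ext ?_ ?_
  · funext r c l
    have hr := r.isLt; have hl := l.isLt
    simp only [HeisAux.Fmap, LinearMap.coe_mk, AddHom.coe_mk]
    rw [HeisAux.shift_apply]
    by_cases hc : c = 0
    · subst hc
      by_cases hlr : (l : ℕ) < (r : ℕ)
      · rw [dif_pos (show (l : ℕ) + 1 < (r : ℕ) + 1 by omega)]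
        exact HeisAux.step k p v (HeisAux.pos p r 0 l) (HeisAux.pos p r 0 ⟨(l : ℕ) + 1, by omega⟩)
          (by simp only [HeisAux.pos_zero_fst, Fin.val_mk])
          (by simp only [HeisAux.pos_zero_snd, Fin.val_mk]; omega)
      · rw [dif_neg (by omega)]
        exact HeisAux.step0 k p v (HeisAux.pos p r 0 l)
          (by rw [HeisAux.pos_zero_fst, HeisAux.pos_zero_snd]; omega)
    · have hc1 : c = 1 := Fin.eq_one_of_ne_zero c hc
      subst hc1
      by_cases hlr : (l : ℕ) < (r : ℕ)
      · rw [dif_pos (show (l : ℕ) + 1 < (r : ℕ) + 1 by omega)]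
        exact HeisAux.step k p v (HeisAux.pos p r 1 l) (HeisAux.pos p r 1 ⟨(l : ℕ) + 1, by omega⟩)
          (by simp only [HeisAux.pos_one_fst, Fin.val_mk]; omega)
          (by simp only [HeisAux.pos_one_snd, Fin.val_mk]; omega)
      · rw [dif_neg (by omega)]
        exact HeisAux.step0 k p v (HeisAux.pos p r 1 l)
          (by rw [HeisAux.pos_one_fst, HeisAux.pos_one_snd]; omega)
  · funext l
    have hl := l.isLt
    simp only [HeisAux.Fmap, LinearMap.coe_mk, AddHom.coe_mk]
    rw [HeisAux.shift_apply]
    by_cases hlp : (l : ℕ) + 1 < p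
    · rw [dif_pos hlp]
      exact HeisAux.step k p v (HeisAux.pos2 p l) (HeisAux.pos2 p ⟨(l : ℕ) + 1, hlp⟩)
        (by simp only [HeisAux.pos2_fst, Fin.val_mk])
        (by simp only [HeisAux.pos2_snd, Fin.val_mk]; omega)
    · rw [dif_neg hlp]
      exact HeisAux.step0 k p v (HeisAux.pos2 p l)
        (by rw [HeisAux.pos2_fst, HeisAux.pos2_snd]; omega)
end

section
/- Let k be a field of characteristic p > 2. Let M be the p² × p² block matrix with p × p blocks, whose (i, i+1) block is i·N_p for 1 ≤ i ≤ p−1 (N_p the size-p nilpotent Jordan block) and all other blocks zero, and let F be the p² × p² matrix whose only nonzero block is E (the p × p matrix with a single 1 in the top-right corner) placed in the bottom-left block position. Then (M + F)^n = M^n for all n ≥ 2, rank(M + F) = (p−1)² + 1, and rank((M+F)^n) = (p−n)² for 2 ≤ n ≤ p; consequently the nilpotent matrix M + F has Jordan type 3J_2 ⊕ 2J_3 ⊕ ⋯ ⊕ 2J_{p−1} ⊕ J_p. -/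
/-- The `p² × p²` block matrix `M` whose `(i, i+1)` block is `i·N_p` for `1 ≤ i ≤ p−1`. -/
def heisM (k : Type*) [Field k] (p : ℕ) : Matrix (Fin p × Fin p) (Fin p × Fin p) k :=
  Matrix.of fun x y =>
    if (x.1 : ℕ) + 1 = (y.1 : ℕ) ∧ (x.2 : ℕ) + 1 = (y.2 : ℕ)
    then (((x.1 : ℕ) + 1 : ℕ) : k) else 0

/-- The `p² × p²` matrix `F` whose only nonzero block is `E` (single `1` in the top-right
corner) in the bottom-left block position. -/
def heisF (k : Type*) [Field k] (p : ℕ) : Matrix (Fin p × Fin p) (Fin p × Fin p) k :=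
  Matrix.of fun x y =>
    if (x.1 : ℕ) = p - 1 ∧ (x.2 : ℕ) = 0 ∧ (y.1 : ℕ) = 0 ∧ (y.2 : ℕ) = p - 1
    then 1 else 0

namespace HeisAux

variable (k : Type*) [Field k] (p : ℕ)

/-- weight: product of (a+1)(a+2)...(a+t) cast into k -/
def wgt (a t : ℕ) : k := ∏ u ∈ Finset.range t, ((a + u + 1 : ℕ) : k)

@[simp] lemma wgt_zero (a : ℕ) : wgt k a 0 = 1 := by simp [wgt]

lemma wgt_succ (a t : ℕ) : wgt k a (t + 1) = wgt k a t * ((a + t + 1 : ℕ) : k) := by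
  simp [wgt, Finset.prod_range_succ]

lemma wgt_ne_zero [CharP k p] (hp : p.Prime) {a t : ℕ} (h : a + t < p) :
    wgt k a t ≠ 0 := by
  refine Finset.prod_ne_zero_iff.2 fun u hu => ?_
  rw [Finset.mem_range] at hu
  rw [Ne, CharP.cast_eq_zero_iff k p]
  intro hdvd
  have := Nat.le_of_dvd (by omega) hdvd
  omega

/-- extend a vector on `Fin p × Fin p` to all of ℕ × ℕ by zero -/
def vext (v : Fin p × Fin p → k) (a b : ℕ) : k :=
  if h : a < p ∧ b < p then v (⟨a, h.1⟩, ⟨b, h.2⟩) else 0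

lemma vext_apply (v : Fin p × Fin p → k) (x : Fin p × Fin p) :
    vext k p v x.1 x.2 = v x := by
  simp [vext, x.1.isLt, x.2.isLt]

lemma vext_add (u v : Fin p × Fin p → k) (a b : ℕ) :
    vext k p (u + v) a b = vext k p u a b + vext k p v a b := by
  unfold vext; split <;> simp

lemma vext_smul (c : k) (v : Fin p × Fin p → k) (a b : ℕ) :
    vext k p (c • v) a b = c * vext k p v a b := by
  unfold vext; split <;> simp

lemma vext_of_ge (v : Fin p × Fin p → k) {a b : ℕ} (h : p ≤ a ∨ p ≤ b) :
    vext k p v a b = 0 := by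
  unfold vext; rw [dif_neg]; omega

/-- extend a vector on `Fin n` by zero -/
def fext (n : ℕ) (w : Fin n → k) (i : ℕ) : k :=
  if h : i < n then w ⟨i, h⟩ else 0

lemma fext_apply (n : ℕ) (w : Fin n → k) (i : Fin n) : fext k n w i = w i := by
  simp [fext, i.isLt]

lemma shift_mulVec (n : ℕ) (w : Fin n → k) (i : Fin n) :
    (shiftMat k n).mulVec w i = fext k n w ((i : ℕ) + 1) := by
  unfold fext
  split
  · next h =>
    rw [show w ⟨(i:ℕ)+1, h⟩ = ∑ j : Fin n, (if (i:ℕ)+1 = (j:ℕ) then 1 else 0) * w j from ?_]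
    · rfl
    · rw [Finset.sum_eq_single (⟨(i:ℕ)+1, h⟩ : Fin n)]
      · simp
      · intro j _ hj
        rw [if_neg, zero_mul]
        intro hc; exact hj (Fin.ext hc.symm)
      · simp
  · next h =>
    show ∑ j : Fin n, (if (i:ℕ)+1 = (j:ℕ) then (1:k) else 0) * w j = 0
    refine Finset.sum_eq_zero fun j _ => ?_
    rw [if_neg, zero_mul]
    intro hc; omega

end HeisAux
section Frag
variable (k : Type*) [Field k] (p : ℕ)
open HeisAux

lemma heisM_mulVec (v : Fin p × Fin p → k) (x : Fin p × Fin p) :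
    (heisM k p).mulVec v x = (((x.1 : ℕ) + 1 : ℕ) : k) * vext k p v ((x.1 : ℕ) + 1) ((x.2 : ℕ) + 1) := by
  show ∑ y : Fin p × Fin p,
      (if (x.1 : ℕ) + 1 = (y.1 : ℕ) ∧ (x.2 : ℕ) + 1 = (y.2 : ℕ) then (((x.1:ℕ)+1:ℕ):k) else 0) * v y
      = _
  unfold vext
  by_cases h : (x.1 : ℕ) + 1 < p ∧ (x.2 : ℕ) + 1 < p
  · rw [dif_pos h, Finset.sum_eq_single ((⟨(x.1:ℕ)+1, h.1⟩, ⟨(x.2:ℕ)+1, h.2⟩) : Fin p × Fin p)]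
    · simp
    · intro y _ hy
      rw [if_neg, zero_mul]
      rintro ⟨h1, h2⟩
      exact hy (Prod.ext (Fin.ext h1.symm) (Fin.ext h2.symm))
    · simp
  · rw [dif_neg h, mul_zero]
    refine Finset.sum_eq_zero fun y _ => ?_
    rw [if_neg, zero_mul]
    rintro ⟨h1, h2⟩
    exact h ⟨h1 ▸ y.1.isLt, h2 ▸ y.2.isLt⟩

lemma heisF_mulVec (hp0 : 0 < p) (v : Fin p × Fin p → k) (x : Fin p × Fin p) :
    (heisF k p).mulVec v x =
      if (x.1 : ℕ) = p - 1 ∧ (x.2 : ℕ) = 0 then vext k p v 0 (p - 1) else 0 := by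
  show ∑ y : Fin p × Fin p,
      (if (x.1 : ℕ) = p - 1 ∧ (x.2 : ℕ) = 0 ∧ (y.1 : ℕ) = 0 ∧ (y.2 : ℕ) = p - 1 then (1:k) else 0) * v y
      = _
  by_cases hx : (x.1 : ℕ) = p - 1 ∧ (x.2 : ℕ) = 0
  · rw [if_pos hx, Finset.sum_eq_single ((⟨0, hp0⟩, ⟨p - 1, by omega⟩) : Fin p × Fin p)]
    · rw [if_pos ⟨hx.1, hx.2, rfl, rfl⟩, one_mul]
      unfold vext
      rw [dif_pos ⟨hp0, by omega⟩]
    · intro y _ hy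
      rw [if_neg, zero_mul]
      rintro ⟨-, -, h3, h4⟩
      exact hy (Prod.ext (Fin.ext h3) (Fin.ext h4))
    · simp
  · rw [if_neg hx]
    refine Finset.sum_eq_zero fun y _ => ?_
    rw [if_neg, zero_mul]
    rintro ⟨h1, h2, -⟩
    exact hx ⟨h1, h2⟩

/-- The key computation: the twisted operator on extended coordinates. -/
lemma vext_T (hp3 : 3 ≤ p) (v : Fin p × Fin p → k) (a b : ℕ) :
    vext k p ((heisM k p + heisF k p).mulVec v) a b
      = ((a + 1 : ℕ) : k) * vext k p v (a + 1) (b + 1)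
        + (if a = p - 1 ∧ b = 0 then vext k p v 0 (p - 1) else 0) := by
  by_cases h : a < p ∧ b < p
  · have : vext k p ((heisM k p + heisF k p).mulVec v) a b
        = ((heisM k p + heisF k p).mulVec v) (⟨a, h.1⟩, ⟨b, h.2⟩) := by
      unfold vext; rw [dif_pos h]
    rw [this, Matrix.add_mulVec, Pi.add_apply, heisM_mulVec, heisF_mulVec k p (by omega)]
  · rw [vext_of_ge k p _ (by omega)]
    rw [vext_of_ge k p v (by omega : p ≤ a + 1 ∨ p ≤ b + 1), mul_zero, zero_add, if_neg, ]
    omega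

end Frag
section Frag2
variable (k : Type*) [Field k] (p : ℕ)
open HeisAux

lemma heisM_pow (n : ℕ) :
    (heisM k p) ^ n = Matrix.of fun x y : Fin p × Fin p =>
      if (x.1 : ℕ) + n = (y.1 : ℕ) ∧ (x.2 : ℕ) + n = (y.2 : ℕ) then wgt k (x.1 : ℕ) n else 0 := by
  induction n with
  | zero =>
    ext x y
    by_cases h : x = y
    · subst h; simp [Matrix.one_apply]
    · rw [pow_zero, Matrix.one_apply_ne h, Matrix.of_apply, if_neg]
      rintro ⟨h1, h2⟩
      exact h (Prod.ext (Fin.ext (by omega)) (Fin.ext (by omega)))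
  | succ n ih =>
    ext x y
    rw [pow_succ, ih, Matrix.mul_apply]
    show (∑ z : Fin p × Fin p, (if (x.1:ℕ) + n = (z.1:ℕ) ∧ (x.2:ℕ) + n = (z.2:ℕ) then wgt k (x.1:ℕ) n else 0) *
      (if (z.1:ℕ) + 1 = (y.1:ℕ) ∧ (z.2:ℕ) + 1 = (y.2:ℕ) then (((z.1:ℕ)+1:ℕ):k) else 0)) = _
    rw [Matrix.of_apply]
    by_cases h : (x.1:ℕ) + (n+1) = (y.1:ℕ) ∧ (x.2:ℕ) + (n+1) = (y.2:ℕ)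
    · have hz1 : (x.1:ℕ) + n < p := by have := y.1.isLt; omega
      have hz2 : (x.2:ℕ) + n < p := by have := y.2.isLt; omega
      rw [if_pos h, Finset.sum_eq_single ((⟨(x.1:ℕ)+n, hz1⟩, ⟨(x.2:ℕ)+n, hz2⟩) : Fin p × Fin p)]
      · have e1 : ((((⟨(x.1:ℕ)+n, hz1⟩, ⟨(x.2:ℕ)+n, hz2⟩) : Fin p × Fin p)).1 : ℕ) = (x.1:ℕ)+n := rfl
        have e2 : ((((⟨(x.1:ℕ)+n, hz1⟩, ⟨(x.2:ℕ)+n, hz2⟩) : Fin p × Fin p)).2 : ℕ) = (x.2:ℕ)+n := rfl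
        rw [e1, e2, if_pos ⟨rfl, rfl⟩, if_pos ⟨by omega, by omega⟩, wgt_succ]
      · intro z _ hz
        rw [if_neg, zero_mul]
        rintro ⟨h1, h2⟩
        exact hz (Prod.ext (Fin.ext (show (z.1:ℕ) = (x.1:ℕ)+n by omega))
          (Fin.ext (show (z.2:ℕ) = (x.2:ℕ)+n by omega)))
      · simp
    · rw [if_neg h]
      refine Finset.sum_eq_zero fun z _ => ?_
      by_cases h1 : (x.1:ℕ) + n = (z.1:ℕ) ∧ (x.2:ℕ) + n = (z.2:ℕ)
      · rw [if_neg (show ¬((z.1:ℕ) + 1 = (y.1:ℕ) ∧ (z.2:ℕ) + 1 = (y.2:ℕ)) from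
          fun hc => h ⟨by omega, by omega⟩), mul_zero]
      · rw [if_neg h1, zero_mul]

lemma heisMF_zero : heisM k p * heisF k p = 0 := by
  ext x y
  rw [Matrix.mul_apply, Matrix.zero_apply]
  refine Finset.sum_eq_zero fun z _ => ?_
  simp only [heisM, heisF, Matrix.of_apply]
  split_ifs with h1 h2 <;> first | (exfalso; omega) | simp

lemma heisFM_zero (hp0 : 0 < p) : heisF k p * heisM k p = 0 := by
  ext x y
  rw [Matrix.mul_apply, Matrix.zero_apply]
  refine Finset.sum_eq_zero fun z _ => ?_
  simp only [heisM, heisF, Matrix.of_apply]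
  have := y.1.isLt
  split_ifs with h1 h2 <;> first | (exfalso; omega) | simp

lemma heisFF_zero (hp3 : 3 ≤ p) : heisF k p * heisF k p = 0 := by
  ext x y
  rw [Matrix.mul_apply, Matrix.zero_apply]
  refine Finset.sum_eq_zero fun z _ => ?_
  simp only [heisF, Matrix.of_apply]
  split_ifs with h1 h2 <;> first | (exfalso; omega) | simp

lemma heisPow_eq (hp3 : 3 ≤ p) (n : ℕ) (hn : 2 ≤ n) :
    (heisM k p + heisF k p) ^ n = heisM k p ^ n := by
  induction n with
  | zero => omega
  | succ n ih =>
    rcases Nat.lt_or_ge n 2 with hn2 | hn2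
    · interval_cases n
      · omega
      · rw [pow_two, pow_two, add_mul, mul_add, mul_add, heisMF_zero, heisFM_zero k p (by omega),
          heisFF_zero k p hp3, add_zero, add_zero, add_zero]
    · obtain ⟨m, rfl⟩ : ∃ m, n = m + 1 := ⟨n - 1, by omega⟩
      have h0 : heisM k p ^ (m+1) * heisF k p = 0 := by
        rw [pow_succ, mul_assoc, heisMF_zero, mul_zero]
      rw [pow_succ, ih hn2, mul_add, h0, add_zero, ← pow_succ]

end Frag2
section Frag3
variable {k : Type*} [Field k]
open HeisAux Finset Submodule

lemma rank_of_rows {ι : Type*} [Fintype ι] [DecidableEq ι]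
    (A : Matrix ι ι k) (S : Finset ι) (φ : ι → ι) (c : ι → k)
    (hinj : Set.InjOn φ S) (hc : ∀ x ∈ S, c x ≠ 0)
    (hrow : ∀ x ∈ S, ∀ y, A x y = if y = φ x then c x else 0)
    (hzero : ∀ x ∉ S, A x = 0) :
    A.rank = S.card := by
  have hA : ∀ x : S, A x = (c x : k) • (Pi.single (φ x) (1 : k) : ι → k) := by
    rintro ⟨x, hx⟩
    funext y
    rw [hrow x hx y, Pi.smul_apply, Pi.single_apply]
    split_ifs <;> simp
  have hli : LinearIndependent k (fun x : S => A (x : ι)) := by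
    have hbase : LinearIndependent k (fun x : S => (Pi.single (φ (x : ι)) (1 : k) : ι → k)) := by
      have := (Pi.basisFun k ι).linearIndependent.comp (fun x : S => φ (x : ι))
        (fun x y hxy => Subtype.ext (hinj x.2 y.2 hxy))
      simpa [Function.comp_def, Pi.basisFun_apply] using this
    have := hbase.units_smul (fun x : S => Units.mk0 (c (x : ι)) (hc _ x.2))
    convert this using 1
    funext x
    rw [hA x]
    rfl
  have hspan : span k (Set.range A) = span k (Set.range fun x : S => A (x : ι)) := by
    apply le_antisymm
    · rw [span_le]
      rintro _ ⟨x, rfl⟩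
      by_cases hx : x ∈ S
      · exact subset_span ⟨⟨x, hx⟩, rfl⟩
      · rw [hzero x hx]
        exact Submodule.zero_mem _
    · rw [span_le]
      rintro _ ⟨x, rfl⟩
      exact subset_span ⟨(x : ι), rfl⟩
  rw [Matrix.rank_eq_finrank_span_row]
  erw [hspan]
  rw [ finrank_span_eq_card hli, Fintype.card_coe]

lemma card_filter_lt {m p : ℕ} (h : m ≤ p) :
    (Finset.univ.filter fun i : Fin p => (i : ℕ) < m).card = m := by
  have : (Finset.univ.filter fun i : Fin p => (i : ℕ) < m)
      = Finset.map (Fin.castLEEmb h) Finset.univ := by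
    ext j
    rw [Finset.mem_filter, Finset.mem_map]
    constructor
    · rintro ⟨-, hj⟩
      exact ⟨⟨(j : ℕ), hj⟩, Finset.mem_univ _, Fin.ext rfl⟩
    · rintro ⟨i, -, rfl⟩
      exact ⟨Finset.mem_univ _, by simpa [Fin.castLEEmb, Fin.castLE] using i.isLt⟩
  rw [this, Finset.card_map, Finset.card_univ, Fintype.card_fin]

end Frag3
section Frag4
variable (k : Type*) [Field k] (p : ℕ)
open HeisAux Finset

lemma card_filter_pair {m p : ℕ} (h : m ≤ p) :
    (Finset.univ.filter fun x : Fin p × Fin p => (x.1 : ℕ) < m ∧ (x.2 : ℕ) < m).card = m ^ 2 := by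
  have heq : (Finset.univ.filter fun x : Fin p × Fin p => (x.1 : ℕ) < m ∧ (x.2 : ℕ) < m)
      = (Finset.univ.filter fun i : Fin p => (i : ℕ) < m) ×ˢ
        (Finset.univ.filter fun i : Fin p => (i : ℕ) < m) := by
    ext x
    simp only [Finset.mem_filter, Finset.mem_product, Finset.mem_univ, true_and]
  rw [heq, Finset.card_product, card_filter_lt h, sq]

lemma rank_heisM_pow [CharP k p] (hp : p.Prime) (n : ℕ) (hn1 : 1 ≤ n) (hnp : n ≤ p) :
    (heisM k p ^ n).rank = (p - n) ^ 2 := by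
  rw [← card_filter_pair (show p - n ≤ p by omega)]
  refine rank_of_rows _ _
    (fun x => if h : (x.1 : ℕ) + n < p ∧ (x.2 : ℕ) + n < p
      then (⟨(x.1:ℕ) + n, h.1⟩, ⟨(x.2:ℕ) + n, h.2⟩) else x)
    (fun x => wgt k (x.1 : ℕ) n) ?_ ?_ ?_ ?_
  · intro x hx y hy hxy
    rw [Finset.coe_filter] at hx hy
    simp only [Set.mem_setOf_eq, Finset.mem_univ, true_and] at hx hy
    dsimp only at hxy
    rw [dif_pos ⟨by omega, by omega⟩, dif_pos ⟨by omega, by omega⟩] at hxy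
    obtain ⟨h1, h2⟩ := Prod.ext_iff.mp hxy
    rw [Fin.ext_iff] at h1 h2
    have h1' : (x.1 : ℕ) + n = (y.1 : ℕ) + n := h1
    have h2' : (x.2 : ℕ) + n = (y.2 : ℕ) + n := h2
    exact Prod.ext (Fin.ext (by omega)) (Fin.ext (by omega))
  · intro x hx
    rw [Finset.mem_filter] at hx
    obtain ⟨-, hx1, hx2⟩ := hx
    exact wgt_ne_zero k p hp (by omega)
  · intro x hx y
    rw [Finset.mem_filter] at hx
    obtain ⟨-, hx1, hx2⟩ := hx
    have h : (x.1 : ℕ) + n < p ∧ (x.2 : ℕ) + n < p := ⟨by omega, by omega⟩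
    beta_reduce
    rw [heisM_pow, Matrix.of_apply, dif_pos h]
    refine if_congr ?_ rfl rfl
    constructor
    · rintro ⟨h1, h2⟩
      exact Prod.ext (Fin.ext h1.symm) (Fin.ext h2.symm)
    · rintro rfl
      exact ⟨rfl, rfl⟩
  · intro x hx
    rw [Finset.mem_filter] at hx
    simp only [Finset.mem_univ, true_and, not_and_or, not_lt] at hx
    funext y
    rw [heisM_pow, Matrix.of_apply, Pi.zero_apply, if_neg]
    rintro ⟨h1, h2⟩
    have := y.1.isLt; have := y.2.isLt
    omega

lemma rank_heisMF [CharP k p] (hp : p.Prime) (hp3 : 3 ≤ p) :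
    (heisM k p + heisF k p).rank = (p - 1) ^ 2 + 1 := by
  have hp0 : 0 < p := by omega
  have hnotmem : ((⟨p - 1, by omega⟩, ⟨0, hp0⟩) : Fin p × Fin p) ∉
      (Finset.univ.filter fun x : Fin p × Fin p => (x.1 : ℕ) < p - 1 ∧ (x.2 : ℕ) < p - 1) := by
    rw [Finset.mem_filter]
    rintro ⟨-, h1, -⟩
    have h1' : p - 1 < p - 1 := h1
    omega
  have hcard : (insert ((⟨p - 1, by omega⟩, ⟨0, hp0⟩) : Fin p × Fin p)
      (Finset.univ.filter fun x : Fin p × Fin p =>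
        (x.1 : ℕ) < p - 1 ∧ (x.2 : ℕ) < p - 1)).card = (p - 1) ^ 2 + 1 := by
    rw [Finset.card_insert_of_notMem hnotmem, card_filter_pair (show p - 1 ≤ p by omega)]
  rw [← hcard]
  refine rank_of_rows _ _
    (fun x => if h : (x.1 : ℕ) + 1 < p ∧ (x.2 : ℕ) + 1 < p
      then (⟨(x.1:ℕ) + 1, h.1⟩, ⟨(x.2:ℕ) + 1, h.2⟩) else (⟨0, hp0⟩, ⟨p - 1, by omega⟩))
    (fun x => if (x.1 : ℕ) = p - 1 ∧ (x.2 : ℕ) = 0 then 1 else (((x.1:ℕ) + 1 : ℕ) : k))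
    ?_ ?_ ?_ ?_
  · intro x hx y hy hxy
    simp only [Finset.coe_insert, Set.mem_insert_iff, Finset.coe_filter, Set.mem_setOf_eq,
      Finset.mem_univ, true_and] at hx hy
    dsimp only at hxy
    rcases hx with hx | hx <;> rcases hy with hy | hy
    · rw [hx, hy]
    · have hx1 : (x.1 : ℕ) = p - 1 := by rw [hx]
      have hx2 : (x.2 : ℕ) = 0 := by rw [hx]
      rw [dif_neg (show ¬((x.1 : ℕ) + 1 < p ∧ (x.2 : ℕ) + 1 < p) by omega),
        dif_pos ⟨by omega, by omega⟩] at hxy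
      have h1' : (0 : ℕ) = (y.1 : ℕ) + 1 :=
        congrArg (fun z : Fin p × Fin p => (z.1 : ℕ)) hxy
      omega
    · have hy1 : (y.1 : ℕ) = p - 1 := by rw [hy]
      have hy2 : (y.2 : ℕ) = 0 := by rw [hy]
      rw [dif_neg (show ¬((y.1 : ℕ) + 1 < p ∧ (y.2 : ℕ) + 1 < p) by omega),
        dif_pos ⟨by omega, by omega⟩] at hxy
      have h1' : (x.1 : ℕ) + 1 = (0 : ℕ) :=
        congrArg (fun z : Fin p × Fin p => (z.1 : ℕ)) hxy
      omega
    · rw [dif_pos ⟨by omega, by omega⟩, dif_pos ⟨by omega, by omega⟩] at hxy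
      obtain ⟨h1, h2⟩ := Prod.ext_iff.mp hxy
      have h1' : (x.1 : ℕ) + 1 = (y.1 : ℕ) + 1 := Fin.ext_iff.mp h1
      have h2' : (x.2 : ℕ) + 1 = (y.2 : ℕ) + 1 := Fin.ext_iff.mp h2
      exact Prod.ext (Fin.ext (by omega)) (Fin.ext (by omega))
  · intro x hx
    rcases Finset.mem_insert.mp hx with hx | hx
    · have hx1 : (x.1 : ℕ) = p - 1 := by rw [hx]
      have hx2 : (x.2 : ℕ) = 0 := by rw [hx]
      beta_reduce
      rw [if_pos ⟨hx1, hx2⟩]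
      exact one_ne_zero
    · rw [Finset.mem_filter] at hx
      obtain ⟨-, hx1, hx2⟩ := hx
      beta_reduce
      rw [if_neg (by omega)]
      have hlt : (x.1 : ℕ) + 1 < p := by omega
      intro hc
      exact (wgt_ne_zero k p hp (t := 1) hlt) (by simpa [wgt] using hc)
  · intro x hx y
    rw [Matrix.add_apply]
    rcases Finset.mem_insert.mp hx with hx | hx
    · have hx1 : (x.1 : ℕ) = p - 1 := by rw [hx]
      have hx2 : (x.2 : ℕ) = 0 := by rw [hx]
      have hM : heisM k p x y = 0 := by
        rw [heisM, Matrix.of_apply, if_neg]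
        rintro ⟨h1, -⟩
        have := y.1.isLt
        omega
      rw [hM, zero_add, heisF, Matrix.of_apply]
      beta_reduce
      rw [dif_neg (show ¬((x.1 : ℕ) + 1 < p ∧ (x.2 : ℕ) + 1 < p) by omega),
        if_pos (show (x.1 : ℕ) = p - 1 ∧ (x.2 : ℕ) = 0 from ⟨hx1, hx2⟩)]
      refine if_congr ?_ rfl rfl
      constructor
      · rintro ⟨-, -, h3, h4⟩
        exact Prod.ext (Fin.ext h3) (Fin.ext h4)
      · rintro rfl
        exact ⟨hx1, hx2, rfl, rfl⟩
    · rw [Finset.mem_filter] at hx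
      obtain ⟨-, hx1, hx2⟩ := hx
      have hF : heisF k p x y = 0 := by
        rw [heisF, Matrix.of_apply, if_neg]
        rintro ⟨h1, -⟩
        omega
      have h : (x.1 : ℕ) + 1 < p ∧ (x.2 : ℕ) + 1 < p := ⟨by omega, by omega⟩
      rw [hF, add_zero, heisM, Matrix.of_apply]
      beta_reduce
      rw [dif_pos h, if_neg (show ¬((x.1 : ℕ) = p - 1 ∧ (x.2 : ℕ) = 0) by omega)]
      refine if_congr ?_ rfl rfl
      constructor
      · rintro ⟨h1, h2⟩
        exact Prod.ext (Fin.ext h1.symm) (Fin.ext h2.symm)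
      · rintro rfl
        exact ⟨rfl, rfl⟩
  · intro x hx
    rw [Finset.mem_insert, not_or, Finset.mem_filter] at hx
    obtain ⟨hxs, hxf⟩ := hx
    simp only [Finset.mem_univ, true_and, not_and_or, not_lt] at hxf
    have hxs' : ¬((x.1 : ℕ) = p - 1 ∧ (x.2 : ℕ) = 0) := by
      rintro ⟨h1, h2⟩
      exact hxs (Prod.ext (Fin.ext h1) (Fin.ext h2))
    funext y
    have h1 : ¬((x.1 : ℕ) + 1 = (y.1 : ℕ) ∧ (x.2 : ℕ) + 1 = (y.2 : ℕ)) := by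
      have := y.1.isLt; have := y.2.isLt
      omega
    rw [Pi.zero_apply, Matrix.add_apply, heisM, heisF, Matrix.of_apply, Matrix.of_apply,
      if_neg h1, if_neg (fun hc => hxs' ⟨hc.1, hc.2.1⟩), add_zero]

end Frag4
section Frag5
variable (k : Type*) [Field k] (p : ℕ)
open HeisAux

def e1 (v : Fin p × Fin p → k) : Fin 3 → Fin 2 → k := fun b i =>
  if (b : ℕ) = 0 then
    wgt k (p - 2) (i : ℕ) * vext k p v (p - 2 + (i : ℕ)) (i : ℕ)
  else if (b : ℕ) = 1 then
    wgt k 0 (i : ℕ) * vext k p v (i : ℕ) (p - 2 + (i : ℕ))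
  else if (i : ℕ) = 0 then vext k p v (p - 1) 0 else vext k p v 0 (p - 1)

def e2 (v : Fin p × Fin p → k) : (r : Fin (p - 3)) → Fin 2 → Fin ((r : ℕ) + 3) → k :=
  fun r c i =>
    if (c : ℕ) = 0 then
      wgt k (p - ((r : ℕ) + 3)) (i : ℕ) * vext k p v (p - ((r : ℕ) + 3) + (i : ℕ)) (i : ℕ)
    else wgt k 0 (i : ℕ) * vext k p v (i : ℕ) (p - ((r : ℕ) + 3) + (i : ℕ))

def e3 (v : Fin p × Fin p → k) : Fin p → k := fun i =>
  wgt k 0 (i : ℕ) * vext k p v (i : ℕ) (i : ℕ)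

lemma e1_add (u v : Fin p × Fin p → k) : e1 k p (u + v) = e1 k p u + e1 k p v := by
  funext b i
  simp only [e1, vext_add, Pi.add_apply]
  split_ifs <;> ring

lemma e2_add (u v : Fin p × Fin p → k) : e2 k p (u + v) = e2 k p u + e2 k p v := by
  funext r c i
  simp only [e2, vext_add, Pi.add_apply]
  split_ifs <;> ring

lemma e3_add (u v : Fin p × Fin p → k) : e3 k p (u + v) = e3 k p u + e3 k p v := by
  funext i
  simp only [e3, vext_add, Pi.add_apply]
  ring

lemma e1_smul (a : k) (v : Fin p × Fin p → k) : e1 k p (a • v) = a • e1 k p v := by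
  funext b i
  simp only [e1, vext_smul, Pi.smul_apply, smul_eq_mul]
  split_ifs <;> ring

lemma e2_smul (a : k) (v : Fin p × Fin p → k) : e2 k p (a • v) = a • e2 k p v := by
  funext r c i
  simp only [e2, vext_smul, Pi.smul_apply, smul_eq_mul]
  split_ifs <;> ring

lemma e3_smul (a : k) (v : Fin p × Fin p → k) : e3 k p (a • v) = a • e3 k p v := by
  funext i
  simp only [e3, vext_smul, Pi.smul_apply, smul_eq_mul]
  ring

/-- the target type of the Jordan-form equivalence -/
abbrev JTgt := (Fin 3 → Fin 2 → k) ×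
  ((r : Fin (p - 3)) → Fin 2 → Fin ((r : ℕ) + 3) → k) × (Fin p → k)

def eLin : (Fin p × Fin p → k) →ₗ[k] JTgt k p where
  toFun v := (e1 k p v, e2 k p v, e3 k p v)
  map_add' u v := by
    refine Prod.ext ?_ (Prod.ext ?_ ?_)
    · rw [Prod.fst_add]; exact e1_add k p u v
    · rw [Prod.snd_add, Prod.fst_add]; exact e2_add k p u v
    · rw [Prod.snd_add, Prod.snd_add]; exact e3_add k p u v
  map_smul' a v := by
    refine Prod.ext ?_ (Prod.ext ?_ ?_)
    · rw [RingHom.id_apply, Prod.smul_fst]; exact e1_smul k p a v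
    · rw [RingHom.id_apply, Prod.smul_snd, Prod.smul_fst]; exact e2_smul k p a v
    · rw [RingHom.id_apply, Prod.smul_snd, Prod.smul_snd]; exact e3_smul k p a v

lemma chainA (hp3 : 3 ≤ p) (s : ℕ) (hs2 : 2 ≤ s) (hsp : s < p) (v : Fin p × Fin p → k)
    (t : ℕ) (ht : t < s) :
    wgt k (p - s) t * vext k p ((heisM k p + heisF k p).mulVec v) (p - s + t) t
      = if t + 1 < s then wgt k (p - s) (t + 1) * vext k p v (p - s + (t + 1)) (t + 1) else 0 := by
  rw [vext_T k p hp3, if_neg (show ¬(p - s + t = p - 1 ∧ t = 0) by omega), add_zero]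
  by_cases h : t + 1 < s
  · rw [if_pos h, wgt_succ, show p - s + t + 1 = p - s + (t + 1) from by omega]
    ring
  · rw [if_neg h, vext_of_ge k p v (by omega), mul_zero, mul_zero]

lemma chainB (hp3 : 3 ≤ p) (s : ℕ) (hs2 : 2 ≤ s) (hsp : s < p) (v : Fin p × Fin p → k)
    (t : ℕ) (ht : t < s) :
    wgt k 0 t * vext k p ((heisM k p + heisF k p).mulVec v) t (p - s + t)
      = if t + 1 < s then wgt k 0 (t + 1) * vext k p v (t + 1) (p - s + (t + 1)) else 0 := by
  rw [vext_T k p hp3, if_neg (show ¬(t = p - 1 ∧ p - s + t = 0) by omega), add_zero]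
  by_cases h : t + 1 < s
  · rw [if_pos h, wgt_succ, show p - s + t + 1 = p - s + (t + 1) from by omega]
    push_cast
    ring
  · rw [if_neg h, vext_of_ge k p v (by omega), mul_zero, mul_zero]

lemma chainD (hp3 : 3 ≤ p) (v : Fin p × Fin p → k) (t : ℕ) (ht : t < p) :
    wgt k 0 t * vext k p ((heisM k p + heisF k p).mulVec v) t t
      = if t + 1 < p then wgt k 0 (t + 1) * vext k p v (t + 1) (t + 1) else 0 := by
  rw [vext_T k p hp3, if_neg (show ¬(t = p - 1 ∧ t = 0) by omega), add_zero]
  by_cases h : t + 1 < p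
  · rw [if_pos h, wgt_succ]
    push_cast
    ring
  · rw [if_neg h, vext_of_ge k p v (by omega), mul_zero, mul_zero]

end Frag5
section Frag6
variable (k : Type*) [Field k] (p : ℕ)
open HeisAux

lemma vext_val (v : Fin p × Fin p → k) (a b : Fin p) :
    vext k p v (a : ℕ) (b : ℕ) = v (a, b) := by
  unfold vext
  rw [dif_pos ⟨a.isLt, b.isLt⟩]

lemma fext_mk (n : ℕ) (w : Fin n → k) (t : ℕ) (h : t < n) : fext k n w t = w ⟨t, h⟩ :=
  dif_pos h

lemma fext_ge (n : ℕ) (w : Fin n → k) (t : ℕ) (h : ¬ t < n) : fext k n w t = 0 :=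
  dif_neg h

lemma e1_apply (v : Fin p × Fin p → k) (b : Fin 3) (i : Fin 2) :
    e1 k p v b i =
      if (b : ℕ) = 0 then
        wgt k (p - 2) (i : ℕ) * vext k p v (p - 2 + (i : ℕ)) (i : ℕ)
      else if (b : ℕ) = 1 then
        wgt k 0 (i : ℕ) * vext k p v (i : ℕ) (p - 2 + (i : ℕ))
      else if (i : ℕ) = 0 then vext k p v (p - 1) 0 else vext k p v 0 (p - 1) := rfl

lemma e1_mk (v : Fin p × Fin p → k) (b : Fin 3) (t : ℕ) (h : t < 2) :
    e1 k p v b ⟨t, h⟩ =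
      if (b : ℕ) = 0 then
        wgt k (p - 2) t * vext k p v (p - 2 + t) t
      else if (b : ℕ) = 1 then
        wgt k 0 t * vext k p v t (p - 2 + t)
      else if t = 0 then vext k p v (p - 1) 0 else vext k p v 0 (p - 1) := rfl

lemma e2_apply (v : Fin p × Fin p → k) (r : Fin (p - 3)) (c : Fin 2) (i : Fin ((r : ℕ) + 3)) :
    e2 k p v r c i =
      if (c : ℕ) = 0 then
        wgt k (p - ((r : ℕ) + 3)) (i : ℕ) * vext k p v (p - ((r : ℕ) + 3) + (i : ℕ)) (i : ℕ)
      else wgt k 0 (i : ℕ) * vext k p v (i : ℕ) (p - ((r : ℕ) + 3) + (i : ℕ)) := rfl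

lemma e2_mk (v : Fin p × Fin p → k) (r : Fin (p - 3)) (c : Fin 2) (t : ℕ)
    (h : t < (r : ℕ) + 3) :
    e2 k p v r c ⟨t, h⟩ =
      if (c : ℕ) = 0 then
        wgt k (p - ((r : ℕ) + 3)) t * vext k p v (p - ((r : ℕ) + 3) + t) t
      else wgt k 0 t * vext k p v t (p - ((r : ℕ) + 3) + t) := rfl

lemma e3_apply (v : Fin p × Fin p → k) (i : Fin p) :
    e3 k p v i = wgt k 0 (i : ℕ) * vext k p v (i : ℕ) (i : ℕ) := rfl

lemma e3_mk (v : Fin p × Fin p → k) (t : ℕ) (h : t < p) :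
    e3 k p v ⟨t, h⟩ = wgt k 0 t * vext k p v t t := rfl

lemma e3_step (hp3 : 3 ≤ p) (v : Fin p × Fin p → k) :
    e3 k p ((heisM k p + heisF k p).mulVec v) = (shiftMat k p).mulVec (e3 k p v) := by
  funext i
  rw [shift_mulVec, e3_apply, chainD k p hp3 v _ i.isLt]
  by_cases h : (i : ℕ) + 1 < p
  · rw [if_pos h, fext_mk k p _ _ h, e3_mk]
  · rw [if_neg h, fext_ge k p _ _ h]

lemma e2_step (hp3 : 3 ≤ p) (v : Fin p × Fin p → k) :
    e2 k p ((heisM k p + heisF k p).mulVec v) =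
      fun (r : Fin (p - 3)) (c : Fin 2) => (shiftMat k ((r : ℕ) + 3)).mulVec (e2 k p v r c) := by
  funext r c i
  have hsp : (r : ℕ) + 3 < p := by have := r.isLt; omega
  rw [shift_mulVec, e2_apply]
  by_cases h : (i : ℕ) + 1 < (r : ℕ) + 3
  · rw [fext_mk k _ _ _ h, e2_mk k p v r c ((i : ℕ) + 1) h]
    by_cases hc : (c : ℕ) = 0
    · rw [if_pos hc, if_pos hc, chainA k p hp3 _ (by omega) hsp v _ i.isLt, if_pos h]
    · rw [if_neg hc, if_neg hc, chainB k p hp3 _ (by omega) hsp v _ i.isLt, if_pos h]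
  · rw [fext_ge k _ _ _ h]
    by_cases hc : (c : ℕ) = 0
    · rw [if_pos hc, chainA k p hp3 _ (by omega) hsp v _ i.isLt, if_neg h]
    · rw [if_neg hc, chainB k p hp3 _ (by omega) hsp v _ i.isLt, if_neg h]

lemma e1_step (hp3 : 3 ≤ p) (v : Fin p × Fin p → k) :
    e1 k p ((heisM k p + heisF k p).mulVec v) =
      fun b => (shiftMat k 2).mulVec (e1 k p v b) := by
  funext b i
  have hsp : 2 < p := by omega
  rw [shift_mulVec, e1_apply]
  by_cases hb0 : (b : ℕ) = 0
  · rw [if_pos hb0]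
    by_cases h : (i : ℕ) + 1 < 2
    · rw [fext_mk k _ _ _ h, e1_mk k p v b ((i : ℕ) + 1) h, if_pos hb0,
        chainA k p hp3 2 le_rfl hsp v _ i.isLt, if_pos h]
    · rw [fext_ge k _ _ _ h, chainA k p hp3 2 le_rfl hsp v _ i.isLt, if_neg h]
  · by_cases hb1 : (b : ℕ) = 1
    · rw [if_neg hb0, if_pos hb1]
      by_cases h : (i : ℕ) + 1 < 2
      · rw [fext_mk k _ _ _ h, e1_mk k p v b ((i : ℕ) + 1) h, if_neg hb0, if_pos hb1,
          chainB k p hp3 2 le_rfl hsp v _ i.isLt, if_pos h]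
      · rw [fext_ge k _ _ _ h, chainB k p hp3 2 le_rfl hsp v _ i.isLt, if_neg h]
    · rw [if_neg hb0, if_neg hb1]
      have hsp1 : vext k p ((heisM k p + heisF k p).mulVec v) (p - 1) 0
          = vext k p v 0 (p - 1) := by
        rw [vext_T k p hp3, if_pos ⟨rfl, rfl⟩, show p - 1 + 1 = p from by omega,
          vext_of_ge k p v (Or.inl le_rfl), mul_zero, zero_add]
      have hsp2 : vext k p ((heisM k p + heisF k p).mulVec v) 0 (p - 1) = 0 := by
        rw [vext_T k p hp3, if_neg (show ¬((0 : ℕ) = p - 1 ∧ p - 1 = 0) by omega), add_zero,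
          show p - 1 + 1 = p from by omega, vext_of_ge k p v (Or.inr le_rfl), mul_zero]
      by_cases hi : (i : ℕ) = 0
      · rw [if_pos hi, hsp1, hi, fext_mk k 2 _ (0 + 1) (by omega), e1_mk k p v b (0 + 1) (by omega), if_neg hb0, if_neg hb1,
          if_neg (show ¬(0 + 1 = 0) by omega)]
      · rw [if_neg hi, hsp2, fext_ge k 2 _ _ (by have := i.isLt; omega)]

end Frag6
section Frag7
variable (k : Type*) [Field k] (p : ℕ)
open HeisAux

lemma eLin_inj [CharP k p] (hp : p.Prime) (hp3 : 3 ≤ p) :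
    Function.Injective (eLin k p) := by
  rw [← LinearMap.ker_eq_bot, LinearMap.ker_eq_bot']
  intro v hv
  have h1 : ∀ b i, e1 k p v b i = 0 := by
    intro b i
    have := congrArg (fun z : JTgt k p => z.1 b i) hv
    simpa [eLin] using this
  have h2 : ∀ r c i, e2 k p v r c i = 0 := by
    intro r c i
    have := congrArg (fun z : JTgt k p => z.2.1 r c i) hv
    simpa [eLin] using this
  have h3 : ∀ i, e3 k p v i = 0 := by
    intro i
    have := congrArg (fun z : JTgt k p => z.2.2 i) hv
    simpa [eLin] using this
  funext x
  obtain ⟨a, b⟩ := x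
  rw [Pi.zero_apply]
  have hap := a.isLt
  have hbp := b.isLt
  rcases lt_trichotomy (a : ℕ) (b : ℕ) with hab | hab | hab
  · -- a < b
    rcases Nat.lt_or_ge ((b : ℕ) - (a : ℕ)) (p - 2) with hd | hd
    · -- chain of size p - d, second kind
      have hr : p - ((b : ℕ) - (a : ℕ)) - 3 < p - 3 := by omega
      have hi : (a : ℕ) < (p - ((b : ℕ) - (a : ℕ)) - 3) + 3 := by omega
      have h' : (if (1 : ℕ) = 0 then
            wgt k (p - ((p - ((b : ℕ) - (a : ℕ)) - 3) + 3)) (a : ℕ) *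
              vext k p v (p - ((p - ((b : ℕ) - (a : ℕ)) - 3) + 3) + (a : ℕ)) (a : ℕ)
          else wgt k 0 (a : ℕ) *
              vext k p v (a : ℕ) (p - ((p - ((b : ℕ) - (a : ℕ)) - 3) + 3) + (a : ℕ))) = 0 :=
        h2 ⟨p - ((b : ℕ) - (a : ℕ)) - 3, hr⟩ ⟨1, by omega⟩ ⟨(a : ℕ), hi⟩
      rw [if_neg (by omega : ¬(1 : ℕ) = 0),
        show p - ((p - ((b : ℕ) - (a : ℕ)) - 3) + 3) + (a : ℕ) = (b : ℕ) from by omega,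
        vext_val] at h'
      rcases mul_eq_zero.mp h' with hw | hv0
      · exact absurd hw (wgt_ne_zero k p hp (by omega))
      · exact hv0
    · rcases Nat.lt_or_ge ((b : ℕ) - (a : ℕ)) (p - 1) with hd2 | hd2
      · -- chain of size 2, second kind
        have hi : (a : ℕ) < 2 := by omega
        have h' : (if (1 : ℕ) = 0 then
              wgt k (p - 2) (a : ℕ) * vext k p v (p - 2 + (a : ℕ)) (a : ℕ)
            else if (1 : ℕ) = 1 then
              wgt k 0 (a : ℕ) * vext k p v (a : ℕ) (p - 2 + (a : ℕ))
            else if (a : ℕ) = 0 then vext k p v (p - 1) 0 else vext k p v 0 (p - 1)) = 0 :=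
          h1 ⟨1, by omega⟩ ⟨(a : ℕ), hi⟩
        rw [if_neg (by omega : ¬(1 : ℕ) = 0), if_pos rfl,
          show p - 2 + (a : ℕ) = (b : ℕ) from by omega, vext_val] at h'
        rcases mul_eq_zero.mp h' with hw | hv0
        · exact absurd hw (wgt_ne_zero k p hp (by omega))
        · exact hv0
      · -- special chain, position (0, p-1)
        have h' : (if (2 : ℕ) = 0 then
              wgt k (p - 2) (1 : ℕ) * vext k p v (p - 2 + 1) 1
            else if (2 : ℕ) = 1 then
              wgt k 0 (1 : ℕ) * vext k p v 1 (p - 2 + 1)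
            else if (1 : ℕ) = 0 then vext k p v (p - 1) 0 else vext k p v 0 (p - 1)) = 0 :=
          h1 ⟨2, by omega⟩ ⟨1, by omega⟩
        rw [if_neg (by omega : ¬(2 : ℕ) = 0), if_neg (by omega : ¬(2 : ℕ) = 1),
          if_neg (by omega : ¬(1 : ℕ) = 0)] at h'
        rw [← vext_val k p v a b, show (a : ℕ) = 0 from by omega,
          show (b : ℕ) = p - 1 from by omega]
        exact h'
  · -- diagonal
    have h' : wgt k 0 (a : ℕ) * vext k p v (a : ℕ) (a : ℕ) = 0 := h3 a
    obtain rfl : a = b := Fin.ext hab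
    rw [vext_val] at h'
    rcases mul_eq_zero.mp h' with hw | hv0
    · exact absurd hw (wgt_ne_zero k p hp (by omega))
    · exact hv0
  · -- a > b
    rcases Nat.lt_or_ge ((a : ℕ) - (b : ℕ)) (p - 2) with hd | hd
    · have hr : p - ((a : ℕ) - (b : ℕ)) - 3 < p - 3 := by omega
      have hi : (b : ℕ) < (p - ((a : ℕ) - (b : ℕ)) - 3) + 3 := by omega
      have h' : (if (0 : ℕ) = 0 then
            wgt k (p - ((p - ((a : ℕ) - (b : ℕ)) - 3) + 3)) (b : ℕ) *
              vext k p v (p - ((p - ((a : ℕ) - (b : ℕ)) - 3) + 3) + (b : ℕ)) (b : ℕ)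
          else wgt k 0 (b : ℕ) *
              vext k p v (b : ℕ) (p - ((p - ((a : ℕ) - (b : ℕ)) - 3) + 3) + (b : ℕ))) = 0 :=
        h2 ⟨p - ((a : ℕ) - (b : ℕ)) - 3, hr⟩ ⟨0, by omega⟩ ⟨(b : ℕ), hi⟩
      rw [if_pos rfl,
        show p - ((p - ((a : ℕ) - (b : ℕ)) - 3) + 3) = (a : ℕ) - (b : ℕ) from by omega,
        show (a : ℕ) - (b : ℕ) + (b : ℕ) = (a : ℕ) from by omega, vext_val] at h'
      rcases mul_eq_zero.mp h' with hw | hv0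
      · exact absurd hw (wgt_ne_zero k p hp (by omega))
      · exact hv0
    · rcases Nat.lt_or_ge ((a : ℕ) - (b : ℕ)) (p - 1) with hd2 | hd2
      · have hi : (b : ℕ) < 2 := by omega
        have h' : (if (0 : ℕ) = 0 then
              wgt k (p - 2) (b : ℕ) * vext k p v (p - 2 + (b : ℕ)) (b : ℕ)
            else if (0 : ℕ) = 1 then
              wgt k 0 (b : ℕ) * vext k p v (b : ℕ) (p - 2 + (b : ℕ))
            else if (b : ℕ) = 0 then vext k p v (p - 1) 0 else vext k p v 0 (p - 1)) = 0 :=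
          h1 ⟨0, by omega⟩ ⟨(b : ℕ), hi⟩
        rw [if_pos rfl, show p - 2 + (b : ℕ) = (a : ℕ) from by omega, vext_val] at h'
        rcases mul_eq_zero.mp h' with hw | hv0
        · exact absurd hw (wgt_ne_zero k p hp (by omega))
        · exact hv0
      · -- special chain, position (p-1, 0)
        have h' : (if (2 : ℕ) = 0 then
              wgt k (p - 2) (0 : ℕ) * vext k p v (p - 2 + 0) 0
            else if (2 : ℕ) = 1 then
              wgt k 0 (0 : ℕ) * vext k p v 0 (p - 2 + 0)
            else if (0 : ℕ) = 0 then vext k p v (p - 1) 0 else vext k p v 0 (p - 1)) = 0 :=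
          h1 ⟨2, by omega⟩ ⟨0, by omega⟩
        rw [if_neg (by omega : ¬(2 : ℕ) = 0), if_neg (by omega : ¬(2 : ℕ) = 1),
          if_pos rfl] at h'
        rw [← vext_val k p v a b, show (a : ℕ) = p - 1 from by omega,
          show (b : ℕ) = 0 from by omega]
        exact h'

lemma sum_aux (q : ℕ) : ∑ i ∈ Finset.range q, 2 * (i + 3) = q * q + 5 * q := by
  induction q with
  | zero => simp
  | succ n ih => rw [Finset.sum_range_succ, ih]; ring

lemma finrank_JTgt (hp3 : 3 ≤ p) : Module.finrank k (JTgt k p) = p * p := by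
  rw [Module.finrank_prod, Module.finrank_prod]
  have hA : Module.finrank k (Fin 3 → Fin 2 → k) = 6 := by
    rw [Module.finrank_pi_fintype]
    simp [Module.finrank_pi]
  have hC : Module.finrank k (Fin p → k) = p := by
    rw [Module.finrank_pi]
    simp
  have hB : Module.finrank k ((r : Fin (p - 3)) → Fin 2 → Fin ((r : ℕ) + 3) → k)
      = (p - 3) * (p - 3) + 5 * (p - 3) := by
    rw [Module.finrank_pi_fintype]
    have hper : ∀ r : Fin (p - 3),
        Module.finrank k (Fin 2 → Fin ((r : ℕ) + 3) → k) = 2 * ((r : ℕ) + 3) := by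
      intro r
      rw [Module.finrank_pi_fintype]
      simp [Module.finrank_pi, Finset.sum_const, two_mul]
    rw [Finset.sum_congr rfl (fun r _ => hper r),
      Fin.sum_univ_eq_sum_range (fun i => 2 * (i + 3)) (p - 3), sum_aux]
  rw [hA, hB, hC]
  obtain ⟨q, rfl⟩ : ∃ q, p = q + 3 := ⟨p - 3, by omega⟩
  rw [show q + 3 - 3 = q from by omega]
  ring

end Frag7

open HeisAux in
/-- `(M + F)^n = M^n` for `n ≥ 2`, `rank(M + F) = (p−1)² + 1`,
`rank((M+F)^n) = (p−n)²` for `2 ≤ n ≤ p`; consequently the nilpotent matrix `M + F` has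
Jordan type `3J₂ ⊕ 2J₃ ⊕ ⋯ ⊕ 2J_{p−1} ⊕ J_p`. -/
theorem heisenberg_twisted_matrix_ranks
    (k : Type*) [Field k] (p : ℕ) (hp : p.Prime) (hp2 : 2 < p) [CharP k p] :
    (∀ n : ℕ, 2 ≤ n → (heisM k p + heisF k p) ^ n = (heisM k p) ^ n) ∧
    (heisM k p + heisF k p).rank = (p - 1) ^ 2 + 1 ∧
    (∀ n : ℕ, 2 ≤ n → n ≤ p → ((heisM k p + heisF k p) ^ n).rank = (p - n) ^ 2) ∧
    (∃ e : (Fin p × Fin p → k) ≃ₗ[k]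
        ((Fin 3 → (Fin 2 → k)) ×
          (Π r : Fin (p - 3), Fin 2 → (Fin ((r : ℕ) + 3) → k)) × (Fin p → k)),
      ∀ v : Fin p × Fin p → k,
        e ((heisM k p + heisF k p).mulVecLin v) =
          (fun b => (shiftMat k 2).mulVecLin ((e v).1 b),
           fun (r : Fin (p - 3)) c => (shiftMat k ((r : ℕ) + 3)).mulVecLin ((e v).2.1 r c),
           (shiftMat k p).mulVecLin (e v).2.2)) := by
  have hp3 : 3 ≤ p := hp2
  refine ⟨heisPow_eq k p hp3, rank_heisMF k p hp hp3, ?_, ?_⟩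
  · intro n h2n hnp
    rw [heisPow_eq k p hp3 n h2n, rank_heisM_pow k p hp n (by omega) hnp]
  · have hdim : Module.finrank k (Fin p × Fin p → k) = Module.finrank k (JTgt k p) := by
      rw [finrank_JTgt k p hp3, Module.finrank_pi]
      simp
    refine ⟨LinearMap.linearEquivOfInjective (eLin k p) (eLin_inj k p hp hp3) hdim, ?_⟩
    intro v
    simp only [LinearMap.linearEquivOfInjective_apply]
    show (e1 k p ((heisM k p + heisF k p).mulVec v),
          e2 k p ((heisM k p + heisF k p).mulVec v),
          e3 k p ((heisM k p + heisF k p).mulVec v)) =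
        (fun b => (shiftMat k 2).mulVec (e1 k p v b),
         fun (r : Fin (p - 3)) (c : Fin 2) => (shiftMat k ((r : ℕ) + 3)).mulVec (e2 k p v r c),
         (shiftMat k p).mulVec (e3 k p v))
    exact Prod.ext (e1_step k p hp3 v) (Prod.ext (e2_step k p hp3 v) (e3_step k p hp3 v))
end
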